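/- arXiv:2211.01248 — 9 statements merged into one kernel-verified Lean document; each statement's English description precedes it below -/
import Mathlib

section
/- Partial Fourier sum over a power of a subspace (Claim 4.3): for every subset I ⊆ Fin ℓ, every tuple α ∈ (F^n)^ℓ, and every subspace S of F^n, ∑_{x ∈ S^ℓ} θ^I_α(x) = |S|^{|I|} · ∏_{i ∉ I} 1[α_i ∈ S] if S ≤ Span(α_i : i ∈ I)^⊥, and ∑_{x ∈ S^ℓ} θ^I_α(x) = 0 otherwise. Here S^ℓ denotes the set of tuples x ∈ (F^n)^ℓ with x_j ∈ S for every j. -/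
open Classical

lemma char_sum_subspace {n : ℕ} {F : Type} [Field F] [Fintype F]
    (ψ : AddChar F ℂ) (hψ : ψ ≠ 1) (a : Fin n → F) (S : Submodule F (Fin n → F)) :
    (∑ y : S, ψ (∑ k, a k * (y : Fin n → F) k)) =
      if ∀ v ∈ S, (∑ k, a k * v k) = 0 then (Fintype.card S : ℂ) else 0 := by
  by_cases h : ∀ v ∈ S, (∑ k, a k * v k) = 0
  · rw [if_pos h]
    have h1 : ∀ y : S, ψ (∑ k, a k * (y : Fin n → F) k) = 1 := fun y => by
      rw [h y y.2, AddChar.map_zero_eq_one]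
    simp [h1, Finset.card_univ]
  · rw [if_neg h]
    push_neg at h
    obtain ⟨v0, hv0S, hv0⟩ := h
    obtain ⟨c, hc⟩ := AddChar.ne_one_iff.mp hψ
    set d : F := c / (∑ k, a k * v0 k) with hd
    have hy0mem : d • v0 ∈ S := S.smul_mem _ hv0S
    have hfy0 : (∑ k, a k * (d • v0) k) = c := by
      have h2 : ∀ k, a k * (d • v0) k = d * (a k * v0 k) := fun k => by
        simp only [Pi.smul_apply, smul_eq_mul]; ring
      rw [Finset.sum_congr rfl fun k _ => h2 k, ← Finset.mul_sum, hd,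
        div_mul_cancel₀ c hv0]
    have key : (∑ y : S, ψ (∑ k, a k * (y : Fin n → F) k))
        = ψ c * ∑ y : S, ψ (∑ k, a k * (y : Fin n → F) k) := by
      rw [Finset.mul_sum]
      refine (Fintype.sum_equiv (Equiv.addLeft (⟨d • v0, hy0mem⟩ : S))
        (fun y : S => ψ c * ψ (∑ k, a k * (y : Fin n → F) k))
        (fun y : S => ψ (∑ k, a k * (y : Fin n → F) k)) (fun y => ?_)).symm
      have h3 : (∑ k, a k * ((d • v0) + (y : Fin n → F)) k)
          = (∑ k, a k * (d • v0) k) + ∑ k, a k * (y : Fin n → F) k := by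
        rw [← Finset.sum_add_distrib]
        exact Finset.sum_congr rfl fun k _ => by simp [mul_add]
      simp only [Equiv.coe_addLeft, Submodule.coe_add]
      rw [h3, AddChar.map_add_eq_mul, hfy0]
    have h4 : (1 - ψ c) * (∑ y : S, ψ (∑ k, a k * (y : Fin n → F) k)) = 0 := by
      rw [sub_mul, one_mul, ← key, sub_self]
    rcases mul_eq_zero.mp h4 with h5 | h5
    · exact absurd (sub_eq_zero.mp h5).symm hc
    · exact h5

/-- **Partial Fourier sum over a power of a subspace (Claim 4.3).**
For every `I ⊆ Fin ℓ`, `α ∈ (F^n)^ℓ` and subspace `S ≤ F^n`,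
`∑_{x ∈ S^ℓ} θ^I_α(x) = |S|^|I| ⬝ ∏_{i ∉ I} 1[α_i ∈ S]` if
`S ≤ Span(α_i : i ∈ I)^⊥`, and `0` otherwise. -/
theorem partial_fourier_sum_subspace_power
    (n ℓ : ℕ) (hn : 1 ≤ n) (hl : 1 ≤ ℓ) (F : Type) [Field F] [Fintype F]
    (ψ : AddChar F ℂ) (hψ : ψ ≠ 1)
    (I : Finset (Fin ℓ)) (α : Fin ℓ → Fin n → F) (S : Submodule F (Fin n → F)) :
    (∑ x : Fin ℓ → Fin n → F,
        if ∀ j, x j ∈ S then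
          (∏ i ∈ I, ψ (∑ k, α i k * x i k)) *
            (∏ i ∈ Iᶜ, if x i = α i then (1 : ℂ) else 0)
        else 0)
      = if ∀ v ∈ S, ∀ i ∈ I, (∑ k, α i k * v k) = 0
          then ((Fintype.card S : ℂ)) ^ I.card *
            ∏ i ∈ Iᶜ, (if α i ∈ S then (1 : ℂ) else 0)
          else 0 := by
  set h : Fin ℓ → (Fin n → F) → ℂ := fun i y =>
    (if y ∈ S then (1 : ℂ) else 0) *
      (if i ∈ I then ψ (∑ k, α i k * y k) else if y = α i then 1 else 0) with hh
  have hfI : Finset.univ.filter (· ∈ I) = I := by ext i; simp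
  have hfIc : Finset.univ.filter (fun i => ¬ i ∈ I) = Iᶜ := by ext i; simp
  have step1 : (∑ x : Fin ℓ → Fin n → F,
      if ∀ j, x j ∈ S then
        (∏ i ∈ I, ψ (∑ k, α i k * x i k)) *
          (∏ i ∈ Iᶜ, if x i = α i then (1 : ℂ) else 0)
      else 0) = ∑ x : Fin ℓ → Fin n → F, ∏ i, h i (x i) := by
    refine Finset.sum_congr rfl fun x _ => ?_
    by_cases hx : ∀ j, x j ∈ S
    · rw [if_pos hx]
      simp only [hh]
      rw [Finset.prod_mul_distrib,
        Finset.prod_congr rfl (fun i (_ : i ∈ Finset.univ) => if_pos (hx i)),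
        Finset.prod_const_one, one_mul]
      conv_rhs => rw [Finset.prod_ite]
      rw [hfI, hfIc]
    · rw [if_neg hx]
      push_neg at hx
      obtain ⟨j, hj⟩ := hx
      symm
      apply Finset.prod_eq_zero (Finset.mem_univ j)
      simp [hh, hj]
  have step2 : (∑ x : Fin ℓ → Fin n → F, ∏ i, h i (x i))
      = ∏ i, ∑ y : Fin n → F, h i y := by
    rw [Finset.prod_univ_sum]
    rw [Fintype.piFinset_univ]
  have step3 : ∀ i, (∑ y : Fin n → F, h i y) =
      if i ∈ I then (∑ y : S, ψ (∑ k, α i k * (y : Fin n → F) k))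
      else (if α i ∈ S then (1 : ℂ) else 0) := by
    intro i
    by_cases hi : i ∈ I
    · rw [if_pos hi]
      simp only [hh, if_pos hi, ite_mul, one_mul, zero_mul]
      rw [← Finset.sum_filter]
      exact Finset.sum_subtype _ (by simp) _
    · rw [if_neg hi]
      simp only [hh, if_neg hi]
      rw [Finset.sum_congr rfl (fun y _ => show _ =
          (if y = α i then (if y ∈ S then (1:ℂ) else 0) else 0) by
        by_cases h1 : y = α i <;> by_cases h2 : y ∈ S <;> simp [h1, h2])]
      rw [Finset.sum_ite_eq' Finset.univ (α i)
        (fun y => if y ∈ S then (1:ℂ) else 0), if_pos (Finset.mem_univ _)]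
  rw [step1, step2, Finset.prod_congr rfl fun i _ => step3 i, Finset.prod_ite, hfI, hfIc]
  have step4 : ∀ i ∈ I, (∑ y : S, ψ (∑ k, α i k * (y : Fin n → F) k)) =
      if ∀ v ∈ S, (∑ k, α i k * v k) = 0 then (Fintype.card S : ℂ) else 0 :=
    fun i _ => char_sum_subspace ψ hψ (α i) S
  rw [Finset.prod_congr rfl step4]
  by_cases hc : ∀ v ∈ S, ∀ i ∈ I, (∑ k, α i k * v k) = 0
  · rw [if_pos hc, Finset.prod_congr rfl (fun i hi =>
      if_pos (fun v hv => hc v hv i hi)), Finset.prod_const]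
  · rw [if_neg hc]
    push_neg at hc
    obtain ⟨v, hv, i, hi, hne⟩ := hc
    have hzero : (∏ i ∈ I, if ∀ v ∈ S, (∑ k, α i k * v k) = 0
        then (Fintype.card S : ℂ) else 0) = 0 :=
      Finset.prod_eq_zero hi (if_neg (by push_neg; exact ⟨v, hv, hne⟩))
    rw [hzero, zero_mul]
end

section
/- Fourier constraint rewriting: let p be a function from the subspaces of F^n to ℝ and define a : (F^n)^ℓ → ℝ by a(x) := ∑_{T : Span(x) ≤ T} p(T). Then for every α ∈ (F^n)^ℓ, ∑_{x ∈ (F^n)^ℓ} a(x)·χ_α(x) = ∑_{S : S ≤ Span(α)^⊥} |S|^ℓ · p(S) (an equality of complex numbers whose right-hand side is real). -/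
open Classical

lemma addChar_map_sum' {A M : Type*} [AddCommMonoid A] [CommMonoid M] (ψ : AddChar A M)
    {ι : Type*} (s : Finset ι) (f : ι → A) :
    ψ (∑ i ∈ s, f i) = ∏ i ∈ s, ψ (f i) := by
  induction s using Finset.cons_induction with
  | empty => simp
  | cons a s ha ih =>
      rw [Finset.sum_cons, Finset.prod_cons, AddChar.map_add_eq_mul, ih]

lemma key_sum {n : ℕ} {F : Type} [Field F] [Fintype F]
    (ψ : AddChar F ℂ) (hψ : ψ ≠ 1) (T : Submodule F (Fin n → F)) (β : Fin n → F) :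
    ∑ v : T, ψ (∑ i, β i * (v : Fin n → F) i)
      = if ∀ v ∈ T, (∑ i, β i * v i) = 0 then (Fintype.card T : ℂ) else 0 := by
  classical
  set φ : T →+ F :=
    { toFun := fun v => ∑ i, β i * (v : Fin n → F) i
      map_zero' := by simp
      map_add' := by
        intro u v
        simp [Finset.sum_add_distrib, mul_add] }
  set χ : AddChar T ℂ := ψ.compAddMonoidHom φ
  have hsum : ∑ v : T, ψ (∑ i, β i * (v : Fin n → F) i) = ∑ v, χ v := rfl
  rw [hsum, AddChar.sum_eq_ite]
  have hiff : χ = 0 ↔ ∀ v ∈ T, (∑ i, β i * v i) = 0 := by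
    constructor
    · intro h
      by_contra hc
      push_neg at hc
      obtain ⟨v, hvT, hv⟩ := hc
      obtain ⟨a, ha⟩ := AddChar.ne_one_iff.1 hψ
      have : χ ((a / (∑ i, β i * v i)) • (⟨v, hvT⟩ : T)) = 1 := by
        rw [← AddChar.one_eq_zero] at h
        rw [h]; rfl
      refine ha (Eq.trans ?_ this)
      show ψ a = ψ (φ _)
      symm
      congr 1
      have : φ ((a / (∑ i, β i * v i)) • (⟨v, hvT⟩ : T))
          = (a / (∑ i, β i * v i)) * φ ⟨v, hvT⟩ := by
        show (∑ i, β i * ((a / (∑ i, β i * v i)) • v) i)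
          = (a / (∑ i, β i * v i)) * (∑ i, β i * v i)
        rw [Finset.mul_sum]
        refine Finset.sum_congr rfl fun i _ => ?_
        simp only [Pi.smul_apply, smul_eq_mul]
        show β i * _ = _ * (β i * v i)
        ring
      rw [this]
      show (a / (∑ i, β i * v i)) * (∑ i, β i * v i) = a
      field_simp
    · intro h
      rw [← AddChar.one_eq_zero]
      ext v
      show ψ (φ v) = 1
      have : φ v = 0 := h v v.2
      rw [this, AddChar.map_zero_eq_one]
  split_ifs with h1 h2 h2
  · rfl
  · exact absurd (hiff.1 h1) h2
  · exact absurd (hiff.2 h2) h1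
  · rfl

/-- **Fourier constraint rewriting.**
If `a x = ∑_{T ≥ Span(x)} p T`, then for every `α ∈ (F^n)^ℓ`,
`∑_x a(x) χ_α(x) = ∑_{S ≤ Span(α)^⊥} |S|^ℓ p(S)`. -/
theorem fourier_constraint_rewriting
    (n ℓ : ℕ) (hn : 1 ≤ n) (hl : 1 ≤ ℓ) (F : Type) [Field F] [Fintype F]
    (ψ : AddChar F ℂ) (hψ : ψ ≠ 1)
    (p : Submodule F (Fin n → F) → ℝ)
    (a : (Fin ℓ → Fin n → F) → ℝ)
    (ha : ∀ x : Fin ℓ → Fin n → F,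
      a x = ∑ T : Submodule F (Fin n → F),
        if Submodule.span F (Set.range x) ≤ T then p T else 0)
    (α : Fin ℓ → Fin n → F) :
    (∑ x : Fin ℓ → Fin n → F, (a x : ℂ) * ψ (∑ j, ∑ i, α j i * x j i))
      = ∑ S : Submodule F (Fin n → F),
          if ∀ v ∈ S, ∀ j, (∑ i, α j i * v i) = 0
            then ((Fintype.card S : ℂ)) ^ ℓ * (p S : ℂ) else 0 := by
  classical
  simp only [ha]
  push_cast [apply_ite (fun r : ℝ => (r : ℂ))]
  have step1 : ∀ x : Fin ℓ → Fin n → F,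
      ((∑ T : Submodule F (Fin n → F),
        if Submodule.span F (Set.range x) ≤ T then (p T : ℂ) else 0)
        * ψ (∑ j, ∑ i, α j i * x j i))
      = ∑ T : Submodule F (Fin n → F),
          if ∀ j, x j ∈ T then (p T : ℂ) * ψ (∑ j, ∑ i, α j i * x j i) else 0 := by
    intro x
    rw [Finset.sum_mul]
    refine Finset.sum_congr rfl fun T _ => ?_
    have : Submodule.span F (Set.range x) ≤ T ↔ ∀ j, x j ∈ T := by
      rw [Submodule.span_le, Set.range_subset_iff]; rfl
    rw [ite_mul, zero_mul]
    simp [this]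
  simp only [step1]
  rw [Finset.sum_comm]
  refine Finset.sum_congr rfl fun T _ => ?_
  -- inner sum over x with all coordinates in T
  have step2 : (∑ x : Fin ℓ → Fin n → F,
      if ∀ j, x j ∈ T then (p T : ℂ) * ψ (∑ j, ∑ i, α j i * x j i) else 0)
      = ∑ y : Fin ℓ → T, (p T : ℂ) * ψ (∑ j, ∑ i, α j i * (y j : Fin n → F) i) := by
    rw [← Finset.sum_filter]
    rw [Finset.sum_subtype (p := fun x : Fin ℓ → Fin n → F => ∀ j, x j ∈ T) _ (by simp)
      (fun x => (p T : ℂ) * ψ (∑ j, ∑ i, α j i * x j i))]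
    exact Fintype.sum_equiv
      (Equiv.subtypePiEquivPi (α := Fin ℓ) (β := fun _ => Fin n → F) (p := fun _ v => v ∈ T))
      (fun x => (p T : ℂ) * ψ (∑ j, ∑ i, α j i * (x : Fin ℓ → Fin n → F) j i))
      (fun y => (p T : ℂ) * ψ (∑ j, ∑ i, α j i * (y j : Fin n → F) i))
      (fun x => rfl)
  rw [step2, ← Finset.mul_sum]
  have step3 : (∑ y : Fin ℓ → T, ψ (∑ j, ∑ i, α j i * (y j : Fin n → F) i))
      = ∏ j, ∑ v : T, ψ (∑ i, α j i * (v : Fin n → F) i) := by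
    symm
    rw [Finset.prod_univ_sum (fun _ : Fin ℓ => (Finset.univ : Finset T))
      (fun j v => ψ (∑ i, α j i * (v : Fin n → F) i)), Fintype.piFinset_univ]
    exact Finset.sum_congr rfl fun y _ => (addChar_map_sum' ψ Finset.univ _).symm
  rw [step3]
  rw [Finset.prod_congr rfl fun j _ => key_sum ψ hψ T (α j)]
  by_cases h : ∀ v ∈ T, ∀ j, (∑ i, α j i * v i) = 0
  · have h' : ∀ j : Fin ℓ, ∀ v ∈ T, (∑ i, α j i * v i) = 0 := fun j v hv => h v hv j
    rw [if_pos h]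
    rw [Finset.prod_congr rfl fun j (_ : j ∈ Finset.univ) => if_pos (h' j)]
    rw [Finset.prod_const, Finset.card_univ, Fintype.card_fin]
    ring
  · rw [if_neg h]
    push_neg at h
    obtain ⟨v, hv, j, hj⟩ := h
    have hz : (if ∀ v ∈ T, (∑ i, α j i * v i) = 0 then (Fintype.card T : ℂ) else 0) = 0 :=
      if_neg (fun hc => hj (hc v hv))
    rw [Finset.prod_eq_zero (Finset.mem_univ j) hz, mul_zero]
end

section
/- Equivalence of the Krawtchouk LP and its pseudoprobability formulation (Lemma 3.2): assume ℓ ≥ n. Let p be a function from the subspaces of F^n to ℝ and define a : (F^n)^ℓ → ℝ by a(x) := ∑_{T : Span(x) ≤ T} p(T). Then a is feasible for the unsymmetrized Krawtchouk LP at level ℓ if and only if p is feasible for the distance-constrained pseudoprobability program at level ℓ; moreover ∑_{x ∈ (F^n)^ℓ} a(x) = ∑_S |S|^ℓ · p(S). -/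
open Classical

noncomputable section

/-- `χ_α(x) := ψ(∑_j ⟨α_j, x_j⟩)`. -/
def chi {n ℓ : ℕ} {F : Type} [Field F] [Fintype F] (ψ : AddChar F ℂ)
    (α x : Fin ℓ → Fin n → F) : ℂ :=
  ψ (∑ j, ∑ i, α j i * x j i)

/-- Feasibility for the unsymmetrized Krawtchouk LP at level `ℓ`:
normalization, distance constraints, Fourier constraints (each Fourier
coefficient is a nonnegative real), and nonnegativity. -/
def KrawFeasible (n ℓ d : ℕ) (F : Type) [Field F] [Fintype F]
    (ψ : AddChar F ℂ) (a : (Fin ℓ → Fin n → F) → ℝ) : Prop :=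
  a 0 = 1 ∧
  (∀ x : Fin ℓ → Fin n → F,
      (∃ w ∈ Submodule.span F (Set.range x), w ≠ 0 ∧ hammingNorm w ≤ d - 1) → a x = 0) ∧
  (∀ α : Fin ℓ → Fin n → F, ∃ c : ℝ, 0 ≤ c ∧
      (∑ x : Fin ℓ → Fin n → F, (a x : ℂ) * chi ψ α x) = (c : ℂ)) ∧
  (∀ x : Fin ℓ → Fin n → F, 0 ≤ a x)

/-- Feasibility for the distance-constrained pseudoprobability program at level `ℓ`:
normalization, distance constraints, Fourier constraints, and nonnegativity
constraints. -/
def PseudoFeasibleDist (n ℓ d : ℕ) (F : Type) [Field F] [Fintype F]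
    (p : Submodule F (Fin n → F) → ℝ) : Prop :=
  (∑ S : Submodule F (Fin n → F), p S) = 1 ∧
  (∀ S : Submodule F (Fin n → F), (∃ w ∈ S, w ≠ 0 ∧ hammingNorm w ≤ d - 1) → p S = 0) ∧
  (∀ U : Submodule F (Fin n → F),
      0 ≤ ∑ S : Submodule F (Fin n → F),
        if S ≤ U then (Fintype.card S : ℝ) ^ ℓ * p S else 0) ∧
  (∀ U : Submodule F (Fin n → F),
      0 ≤ ∑ S : Submodule F (Fin n → F), if U ≤ S then p S else 0)

namespace KrawAux

variable {n ℓ : ℕ} {F : Type} [Field F] [Fintype F]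

/-- the standard dot-product bilinear form on `F^n`. -/
def B (n : ℕ) (F : Type) [Field F] : LinearMap.BilinForm F (Fin n → F) :=
  LinearMap.mk₂ F (fun u v => ∑ i, u i * v i)
    (fun u u' v => by simp [add_mul, Finset.sum_add_distrib])
    (fun c u v => by simp [Finset.mul_sum, mul_assoc])
    (fun u v v' => by simp [mul_add, Finset.sum_add_distrib])
    (fun c u v => by simp [Finset.mul_sum, mul_left_comm])

lemma B_apply (u v : Fin n → F) : B n F u v = ∑ i, u i * v i := rfl

lemma B_refl : (B n F).IsRefl := by
  intro u v h
  simpa [B_apply, mul_comm] using h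

lemma B_nondeg : (B n F).Nondegenerate := by
  refine (LinearMap.IsRefl.nondegenerate_iff_separatingLeft (B := B n F) B_refl).2 ?_
  intro u h
  funext i
  have := h (Pi.single i 1)
  rw [B_apply] at this
  simpa [Pi.single_apply, mul_ite, Finset.sum_ite_eq'] using this

lemma span_le_iff (x : Fin ℓ → Fin n → F) (T : Submodule F (Fin n → F)) :
    Submodule.span F (Set.range x) ≤ T ↔ ∀ j, x j ∈ T := by
  rw [Submodule.span_le, Set.range_subset_iff]
  rfl

lemma charSum (ψ : AddChar F ℂ) (hψ : ψ ≠ 1) (T : Submodule F (Fin n → F))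
    (v : Fin n → F) :
    ∑ t : T, ψ (∑ i, v i * (t : Fin n → F) i)
      = if ∀ u ∈ T, ∑ i, v i * u i = 0 then (Fintype.card T : ℂ) else 0 := by
  by_cases h : ∀ u ∈ T, ∑ i, v i * u i = 0
  · rw [if_pos h]
    have : ∀ t : T, ψ (∑ i, v i * (t : Fin n → F) i) = 1 := by
      intro t
      rw [h _ t.2, AddChar.map_zero_eq_one]
    simp [this]
  · rw [if_neg h]
    push_neg at h
    obtain ⟨u, hu, hc⟩ := h
    set f : T →+ F := (((B n F) v).comp T.subtype).toAddMonoidHom with hfdef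
    have hf : ∀ t : T, f t = ∑ i, v i * (t : Fin n → F) i := fun t => rfl
    set ψ' : AddChar T ℂ := ψ.compAddMonoidHom f with hψ'def
    have hne : ψ' ≠ 1 := by
      obtain ⟨b, hb⟩ := AddChar.ne_one_iff.1 hψ
      refine AddChar.ne_one_iff.2 ⟨(b / (∑ i, v i * u i)) • ⟨u, hu⟩, ?_⟩
      have hfv : f ((b / (∑ i, v i * u i)) • (⟨u, hu⟩ : T)) = b := by
        rw [hf]
        simp only [SetLike.val_smul, Pi.smul_apply, smul_eq_mul]
        have hsum : ∑ i, v i * ((b / (∑ i, v i * u i)) * u i)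
            = (b / (∑ i, v i * u i)) * ∑ i, v i * u i := by
          rw [Finset.mul_sum]
          exact Finset.sum_congr rfl fun i _ => by ring
        rw [hsum, div_mul_cancel₀ _ hc]
      rw [hψ'def, AddChar.compAddMonoidHom_apply, hfv]
      exact hb
    have := AddChar.sum_eq_zero_of_ne_one hne
    simpa [hψ'def, hf] using this

/-- reindexing sums over tuples lying in a submodule `T`. -/
lemma sum_tuples_in (T : Submodule F (Fin n → F)) (f : (Fin ℓ → Fin n → F) → ℂ) :
    ∑ x : Fin ℓ → Fin n → F, (if ∀ j, x j ∈ T then f x else 0)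
      = ∑ y : Fin ℓ → T, f (fun j => (y j : Fin n → F)) := by
  classical
  rw [← Finset.sum_filter]
  rw [Finset.sum_subtype (Finset.univ.filter (fun x : Fin ℓ → Fin n → F => ∀ j, x j ∈ T))
      (p := fun x : Fin ℓ → Fin n → F => ∀ j, x j ∈ T) (by simp) f]
  let e : (Fin ℓ → T) ≃ {x : Fin ℓ → Fin n → F // ∀ j, x j ∈ T} :=
    { toFun := fun y => ⟨fun j => (y j : Fin n → F), fun j => (y j).2⟩
      invFun := fun x j => ⟨x.1 j, x.2 j⟩
      left_inv := fun y => rfl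
      right_inv := fun x => rfl }
  exact (Fintype.sum_equiv e (fun y => f (fun j => (y j : Fin n → F)))
    (fun x => f x.1) (fun y => rfl)).symm

lemma addChar_map_sum (ψ : AddChar F ℂ) {ι : Type*} (s : Finset ι) (g : ι → F) :
    ψ (∑ j ∈ s, g j) = ∏ j ∈ s, ψ (g j) := by
  classical
  induction s using Finset.induction with
  | empty => simp
  | insert _ _ h ih => rw [Finset.sum_insert h, Finset.prod_insert h, AddChar.map_add_eq_mul, ih]

/-- The key Fourier computation. -/
lemma fourier_sum (ψ : AddChar F ℂ) (hψ : ψ ≠ 1)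
    (p : Submodule F (Fin n → F) → ℝ) (α : Fin ℓ → Fin n → F) :
    ∑ x : Fin ℓ → Fin n → F,
        ((∑ T : Submodule F (Fin n → F),
          if Submodule.span F (Set.range x) ≤ T then p T else 0 : ℝ) : ℂ)
          * chi ψ α x
      = ((∑ T : Submodule F (Fin n → F),
          if (∀ j, ∀ u ∈ T, ∑ i, α j i * u i = 0)
            then (Fintype.card T : ℝ) ^ ℓ * p T else 0 : ℝ) : ℂ) := by
  classical
  have step1 : ∀ x : Fin ℓ → Fin n → F,
      ((∑ T : Submodule F (Fin n → F),
          if Submodule.span F (Set.range x) ≤ T then p T else 0 : ℝ) : ℂ) * chi ψ α x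
        = ∑ T : Submodule F (Fin n → F),
            (if ∀ j, x j ∈ T then (p T : ℂ) * chi ψ α x else 0) := by
    intro x
    simp only [Complex.ofReal_sum, apply_ite Complex.ofReal, Complex.ofReal_zero,
      Finset.sum_mul, ite_mul, zero_mul]
    exact Finset.sum_congr rfl fun T _ => if_congr (span_le_iff x T) rfl rfl
  rw [Finset.sum_congr rfl fun x _ => step1 x, Finset.sum_comm]
  have step2 : ∀ T : Submodule F (Fin n → F),
      ∑ x : Fin ℓ → Fin n → F, (if ∀ j, x j ∈ T then (p T : ℂ) * chi ψ α x else 0)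
        = (if (∀ j, ∀ u ∈ T, ∑ i, α j i * u i = 0)
            then ((Fintype.card T : ℝ) ^ ℓ * p T : ℝ) else 0 : ℝ) := by
    intro T
    rw [sum_tuples_in T (fun x => (p T : ℂ) * chi ψ α x)]
    have hchi : ∀ y : Fin ℓ → T,
        chi ψ α (fun j => (y j : Fin n → F))
          = ∏ j, ψ (∑ i, α j i * (y j : Fin n → F) i) := by
      intro y
      rw [chi, addChar_map_sum]
    rw [Finset.sum_congr rfl fun y _ => by rw [hchi y]]
    rw [← Finset.mul_sum]
    have hps := Finset.prod_univ_sum (fun _ : Fin ℓ => (Finset.univ : Finset T))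
      (fun j t => ψ (∑ i, α j i * (t : Fin n → F) i))
    rw [Fintype.piFinset_univ] at hps
    rw [← hps]
    have step3 : ∀ j : Fin ℓ,
        ∑ t : T, ψ (∑ i, α j i * (t : Fin n → F) i)
          = if ∀ u ∈ T, ∑ i, α j i * u i = 0 then (Fintype.card T : ℂ) else 0 :=
      fun j => charSum ψ hψ T (α j)
    rw [Finset.prod_congr rfl fun j _ => step3 j]
    by_cases h : ∀ j : Fin ℓ, ∀ u ∈ T, ∑ i, α j i * u i = 0
    · rw [if_pos h]
      rw [Finset.prod_congr rfl fun j _ => if_pos (h j)]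
      push_cast
      rw [Finset.prod_const, Finset.card_univ, Fintype.card_fin]
      ring
    · rw [if_neg h]
      obtain ⟨j, hj⟩ := not_forall.1 h
      rw [Finset.prod_eq_zero (Finset.mem_univ j) (by rw [if_neg hj]), mul_zero]
      simp
  refine Eq.trans (Finset.sum_congr rfl fun T _ => step2 T) ?_
  push_cast
  rfl

/-- every submodule is the span of an `ℓ`-tuple when `ℓ ≥ n`. -/
lemma exists_span_eq (hnl : n ≤ ℓ) (U : Submodule F (Fin n → F)) :
    ∃ x : Fin ℓ → Fin n → F, Submodule.span F (Set.range x) = U := by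
  classical
  set m := Module.finrank F U with hm
  have hmn : m ≤ n := by
    have := Submodule.finrank_le U
    rwa [Module.finrank_fin_fun] at this
  have hml : m ≤ ℓ := hmn.trans hnl
  let b : Module.Basis (Fin m) F U := Module.finBasis F U
  refine ⟨fun j => if h : (j : ℕ) < m then (b ⟨j, h⟩ : Fin n → F) else 0, ?_⟩
  apply le_antisymm
  · refine Submodule.span_le.2 ?_
    rintro _ ⟨j, rfl⟩
    by_cases h : (j : ℕ) < m
    · simpa [h] using (b ⟨j, h⟩).2
    · simp [h]
  · have hU : Submodule.span F (Set.range (U.subtype ∘ b)) = U := by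
      rw [Set.range_comp, Submodule.span_image, b.span_eq, Submodule.map_subtype_top]
    refine le_trans (le_of_eq hU.symm) (Submodule.span_mono ?_)
    rintro _ ⟨i, rfl⟩
    refine ⟨⟨(i : ℕ), lt_of_lt_of_le i.2 hml⟩, ?_⟩
    simp [i.2]

lemma cond_iff (α : Fin ℓ → Fin n → F) (T : Submodule F (Fin n → F)) :
    (∀ j, ∀ u ∈ T, ∑ i, α j i * u i = 0)
      ↔ T ≤ (B n F).orthogonal (Submodule.span F (Set.range α)) := by
  constructor
  · intro h u hu
    rw [LinearMap.BilinForm.mem_orthogonal_iff]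
    intro w hw
    have hker : Submodule.span F (Set.range α) ≤ LinearMap.ker ((B n F).flip u) := by
      rw [Submodule.span_le, Set.range_subset_iff]
      intro j
      rw [SetLike.mem_coe, LinearMap.mem_ker]
      exact h j u hu
    exact hker hw
  · intro h j u hu
    exact (LinearMap.BilinForm.mem_orthogonal_iff.1 (h hu)) (α j)
      (Submodule.subset_span ⟨j, rfl⟩)

end KrawAux



/-- **Equivalence of the Krawtchouk LP and its pseudoprobability formulation
(Lemma 3.2).** For `ℓ ≥ n`, with `a x := ∑_{T ≥ Span x} p T`, `a` is feasible for
the unsymmetrized Krawtchouk LP iff `p` is feasible for the distance-constrained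
pseudoprobability program, and the objectives agree:
`∑_x a x = ∑_S |S|^ℓ p S`. -/
theorem kraw_pseudoprob_equivalence
    (n ℓ d : ℕ) (hn : 1 ≤ n) (hd : 1 ≤ d) (hdn : d ≤ n) (hnl : n ≤ ℓ)
    (F : Type) [Field F] [Fintype F]
    (ψ : AddChar F ℂ) (hψ : ψ ≠ 1)
    (p : Submodule F (Fin n → F) → ℝ)
    (a : (Fin ℓ → Fin n → F) → ℝ)
    (ha : ∀ x : Fin ℓ → Fin n → F,
      a x = ∑ T : Submodule F (Fin n → F),
        if Submodule.span F (Set.range x) ≤ T then p T else 0) :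
    (KrawFeasible n ℓ d F ψ a ↔ PseudoFeasibleDist n ℓ d F p) ∧
    (∑ x : Fin ℓ → Fin n → F, a x)
      = ∑ S : Submodule F (Fin n → F), (Fintype.card S : ℝ) ^ ℓ * p S := by
  classical
  have key : ∀ α : Fin ℓ → Fin n → F,
      (∑ x : Fin ℓ → Fin n → F, (a x : ℂ) * chi ψ α x)
        = ((∑ T : Submodule F (Fin n → F),
            if (∀ j, ∀ u ∈ T, ∑ i, α j i * u i = 0)
              then (Fintype.card T : ℝ) ^ ℓ * p T else 0 : ℝ) : ℂ) := by
    intro α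
    rw [← KrawAux.fourier_sum ψ hψ p α]
    exact Finset.sum_congr rfl fun x _ => by rw [ha x]
  have hperp : ∀ U : Submodule F (Fin n → F), ∃ α : Fin ℓ → Fin n → F,
      ∀ T : Submodule F (Fin n → F),
        ((∀ j, ∀ u ∈ T, ∑ i, α j i * u i = 0) ↔ T ≤ U) := by
    intro U
    obtain ⟨α, hα⟩ := KrawAux.exists_span_eq hnl ((KrawAux.B n F).orthogonal U)
    refine ⟨α, fun T => ?_⟩
    rw [KrawAux.cond_iff, hα,
      LinearMap.BilinForm.orthogonal_orthogonal KrawAux.B_nondeg KrawAux.B_refl]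
  have h0span : ∀ T : Submodule F (Fin n → F),
      Submodule.span F (Set.range (0 : Fin ℓ → Fin n → F)) ≤ T :=
    fun T => (KrawAux.span_le_iff 0 T).2 fun j => by simpa using T.zero_mem
  have hobj : (∑ x : Fin ℓ → Fin n → F, a x)
      = ∑ S : Submodule F (Fin n → F), (Fintype.card S : ℝ) ^ ℓ * p S := by
    have h0 := key 0
    have hchi : ∀ x : Fin ℓ → Fin n → F, chi ψ (0 : Fin ℓ → Fin n → F) x = 1 := by
      intro x
      simp [chi]
    simp only [hchi, mul_one] at h0
    rw [← Complex.ofReal_sum] at h0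
    have hr := Complex.ofReal_injective h0
    rw [hr]
    refine Finset.sum_congr rfl fun T _ => ?_
    rw [if_pos]
    intro j u hu
    simp
  refine ⟨⟨fun hK => ?_, fun hP => ?_⟩, hobj⟩
  · obtain ⟨hK1, hK2, hK3, hK4⟩ := hK
    have hnorm : (∑ S : Submodule F (Fin n → F), p S) = 1 := by
      rw [ha 0] at hK1
      rw [← hK1]
      exact Finset.sum_congr rfl fun T _ => (if_pos (h0span T)).symm
    have hdist : ∀ S : Submodule F (Fin n → F),
        (∃ w ∈ S, w ≠ 0 ∧ hammingNorm w ≤ d - 1) → p S = 0 := by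
      haveI : Finite (Submodule F (Fin n → F)) :=
        Finite.of_injective (fun S : Submodule F (Fin n → F) => (S : Set (Fin n → F)))
          SetLike.coe_injective
      have wf : WellFounded ((· > ·) : Submodule F (Fin n → F) →
          Submodule F (Fin n → F) → Prop) := IsWellFounded.wf
      intro S
      refine wf.induction
        (C := fun S => (∃ w ∈ S, w ≠ 0 ∧ hammingNorm w ≤ d - 1) → p S = 0) S ?_
      intro S IH hS
      obtain ⟨w, hwS, hw0, hwd⟩ := hS
      obtain ⟨x, hx⟩ := KrawAux.exists_span_eq hnl S
      have hax : a x = 0 := hK2 x ⟨w, by rw [hx]; exact hwS, hw0, hwd⟩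
      rw [ha x, hx] at hax
      have hsum : (∑ T : Submodule F (Fin n → F), if S ≤ T then p T else 0) = p S := by
        have hterm : ∀ T : Submodule F (Fin n → F),
            (if S ≤ T then p T else 0) = if T = S then p S else 0 := by
          intro T
          by_cases hTS : T = S
          · subst hTS; simp
          · by_cases hST : S ≤ T
            · rw [if_pos hST, if_neg hTS]
              exact IH T (lt_of_le_of_ne hST (Ne.symm hTS)) ⟨w, hST hwS, hw0, hwd⟩
            · rw [if_neg hST, if_neg hTS]
        rw [Finset.sum_congr rfl fun T _ => hterm T]
        simp
      rw [hsum] at hax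
      exact hax
    have hF : ∀ U : Submodule F (Fin n → F),
        0 ≤ ∑ S : Submodule F (Fin n → F),
          if S ≤ U then (Fintype.card S : ℝ) ^ ℓ * p S else 0 := by
      intro U
      obtain ⟨α, hα⟩ := hperp U
      obtain ⟨c, hc0, hc⟩ := hK3 α
      rw [key α] at hc
      have hr : (∑ T : Submodule F (Fin n → F),
          if (∀ j, ∀ u ∈ T, ∑ i, α j i * u i = 0)
            then (Fintype.card T : ℝ) ^ ℓ * p T else 0) = c := by exact_mod_cast hc
      have heq : (∑ S : Submodule F (Fin n → F),
          if S ≤ U then (Fintype.card S : ℝ) ^ ℓ * p S else 0) = c := by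
        rw [← hr]
        exact Finset.sum_congr rfl fun T _ => if_congr (hα T).symm rfl rfl
      rw [heq]
      exact hc0
    have hN : ∀ U : Submodule F (Fin n → F),
        0 ≤ ∑ S : Submodule F (Fin n → F), if U ≤ S then p S else 0 := by
      intro U
      obtain ⟨x, hx⟩ := KrawAux.exists_span_eq hnl U
      have := hK4 x
      rw [ha x, hx] at this
      exact this
    exact ⟨hnorm, hdist, hF, hN⟩
  · obtain ⟨hP1, hP2, hP3, hP4⟩ := hP
    refine ⟨?_, ?_, ?_, ?_⟩
    · rw [ha 0, ← hP1]
      exact Finset.sum_congr rfl fun T _ => if_pos (h0span T)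
    · intro x hx
      obtain ⟨w, hw, hw0, hwd⟩ := hx
      rw [ha x]
      refine Finset.sum_eq_zero fun T _ => ?_
      by_cases hT : Submodule.span F (Set.range x) ≤ T
      · rw [if_pos hT, hP2 T ⟨w, hT hw, hw0, hwd⟩]
      · rw [if_neg hT]
    · intro α
      refine ⟨_, hP3 ((KrawAux.B n F).orthogonal (Submodule.span F (Set.range α))), ?_⟩
      rw [key α]
      norm_cast
      exact Finset.sum_congr rfl fun T _ => if_congr (KrawAux.cond_iff α T) rfl rfl
    · intro x
      rw [ha x]
      exact hP4 (Submodule.span F (Set.range x))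
end
end

section
/- Optimum solutions are integral (Theorem 3.6, structure of optima): assume ℓ ≥ n. If p is feasible for the dimension-constrained pseudoprobability program at level ℓ and maximizes the objective ∑_S |S|^ℓ · p(S) among all feasible solutions, then p(S) ≥ 0 for every subspace S, ∑_S p(S) = 1, and p(S) = 0 for every subspace S with dim S ≠ k₀; in particular p is a probability distribution supported on subspaces of dimension exactly k₀. -/
open Classical

noncomputable section

/-- A subspace `C ≤ F^n` has minimum distance at least `d` if every nonzero
codeword has Hamming weight at least `d`. -/
def MinDistGe (n d : ℕ) (F : Type) [Field F] [Fintype F]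
    (C : Submodule F (Fin n → F)) : Prop :=
  ∀ w ∈ C, w ≠ 0 → d ≤ hammingNorm w

/-- `k₀`: the maximum dimension of a subspace of `F^n` of minimum distance at
least `d`. -/
def kzero (n d : ℕ) (F : Type) [Field F] [Fintype F] : ℕ :=
  sSup {k : ℕ | ∃ C : Submodule F (Fin n → F), MinDistGe n d F C ∧ Module.finrank F C = k}

/-- Feasibility for the dimension-constrained pseudoprobability program at level `ℓ`:
normalization, dimension constraints, Fourier constraints, and nonnegativity
constraints. -/
def PseudoFeasibleDim (n ℓ d : ℕ) (F : Type) [Field F] [Fintype F]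
    (p : Submodule F (Fin n → F) → ℝ) : Prop :=
  (∑ S : Submodule F (Fin n → F), p S) = 1 ∧
  (∀ S : Submodule F (Fin n → F), kzero n d F < Module.finrank F S → p S = 0) ∧
  (∀ U : Submodule F (Fin n → F),
      0 ≤ ∑ S : Submodule F (Fin n → F),
        if S ≤ U then (Fintype.card S : ℝ) ^ ℓ * p S else 0) ∧
  (∀ U : Submodule F (Fin n → F),
      0 ≤ ∑ S : Submodule F (Fin n → F), if U ≤ S then p S else 0)

section Aux

open Finset

set_option linter.unusedSectionVars false

variable {n ℓ d : ℕ} {F : Type} [Field F] [Fintype F]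

lemma kzero_mem (n d : ℕ) (F : Type) [Field F] [Fintype F] :
    ∃ C : Submodule F (Fin n → F),
      MinDistGe n d F C ∧ Module.finrank F C = kzero n d F := by
  have : kzero n d F ∈ {k : ℕ | ∃ C : Submodule F (Fin n → F),
      MinDistGe n d F C ∧ Module.finrank F C = k} := by
    apply Nat.sSup_mem
    · exact ⟨0, ⊥, fun w hw hw0 => absurd ((Submodule.mem_bot F).mp hw) hw0, finrank_bot F _⟩
    · exact ⟨n, fun k hk => by
        obtain ⟨C, -, hC⟩ := hk
        rw [← hC]
        simpa using Submodule.finrank_le C⟩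
  exact this

lemma kzero_le_n (n d : ℕ) (F : Type) [Field F] [Fintype F] : kzero n d F ≤ n := by
  obtain ⟨C, -, hC⟩ := kzero_mem n d F
  rw [← hC]
  simpa using Submodule.finrank_le C

/-- The multiplier system: `lam U` is defined by downward recursion on the
subspace lattice so that `∑_{U ⊇ S} lam U = Q^(k₀ - dim S) - 1` for every
subspace `S` of dimension `< k₀`, and `lam U = 0` for `dim U ≥ k₀`. -/
def lam (n ℓ d : ℕ) (F : Type) [Field F] [Fintype F] (U : Submodule F (Fin n → F)) : ℝ :=
  if Module.finrank F U < kzero n d F then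
    ((Fintype.card F : ℝ) ^ ℓ) ^ (kzero n d F - Module.finrank F U) - 1 -
      ∑ X ∈ (Finset.univ.filter (fun X : Submodule F (Fin n → F) => U < X)).attach,
        lam n ℓ d F X.1
  else 0
termination_by n - Module.finrank F U
decreasing_by
  have hX := X.2
  rw [Finset.mem_filter] at hX
  have h1 : Module.finrank F U < Module.finrank F X.1 :=
    Submodule.finrank_lt_finrank_of_lt hX.2
  have h2 : Module.finrank F X.1 ≤ n := by simpa using Submodule.finrank_le X.1
  omega

lemma lam_of_ge (U : Submodule F (Fin n → F)) (h : ¬ Module.finrank F U < kzero n d F) :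
    lam n ℓ d F U = 0 := by
  rw [lam, if_neg h]

lemma lam_of_lt (U : Submodule F (Fin n → F)) (h : Module.finrank F U < kzero n d F) :
    lam n ℓ d F U = ((Fintype.card F : ℝ) ^ ℓ) ^ (kzero n d F - Module.finrank F U) - 1 -
      ∑ X ∈ Finset.univ.filter (fun X : Submodule F (Fin n → F) => U < X),
        lam n ℓ d F X := by
  rw [lam, if_pos h, Finset.sum_attach]

lemma rank_sup_span (U : Submodule F (Fin n → F)) (w : Fin n → F) (hw : w ∉ U) :
    Module.finrank F ↥(U ⊔ Submodule.span F {w}) = Module.finrank F U + 1 := by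
  have hw0 : w ≠ 0 := fun h => hw (h ▸ U.zero_mem)
  have hdisj : Disjoint U (Submodule.span F {w}) :=
    Submodule.disjoint_span_singleton.mpr (fun h => absurd h hw)
  have h := Submodule.finrank_sup_add_finrank_inf_eq U (Submodule.span F {w})
  rw [hdisj.eq_bot, finrank_bot, finrank_span_singleton hw0] at h
  omega

lemma lt_sup_span (U : Submodule F (Fin n → F)) (w : Fin n → F) (hw : w ∉ U) :
    U < U ⊔ Submodule.span F {w} := by
  refine lt_of_le_of_ne le_sup_left (fun h => hw ?_)
  have : w ∈ U ⊔ Submodule.span F {w} :=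
    Submodule.mem_sup_right (Submodule.mem_span_singleton_self w)
  rwa [← h] at this

lemma card_filter_mem (X : Submodule F (Fin n → F)) :
    (univ.filter (fun w : Fin n → F => w ∈ X)).card
      = Fintype.card F ^ Module.finrank F X := by
  rw [← Module.card_eq_pow_finrank (K := F) (V := X)]
  simp [Fintype.card_subtype]

/-- The number of subspaces covering `U` (one dimension higher) is at most
`q^(n-k) - 1`. -/
lemma covers_card_le (U : Submodule F (Fin n → F)) :
    (univ.filter (fun X : Submodule F (Fin n → F) =>
        U < X ∧ Module.finrank F X = Module.finrank F U + 1)).card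
      ≤ Fintype.card F ^ (n - Module.finrank F U) - 1 := by
  set q := Fintype.card F with hq
  have hq2 : 2 ≤ q := Fintype.one_lt_card
  set k := Module.finrank F U with hk
  have hkn : k ≤ n := by simpa using Submodule.finrank_le U
  set s := univ.filter (fun X : Submodule F (Fin n → F) =>
      U < X ∧ Module.finrank F X = k + 1) with hs
  set A : Submodule F (Fin n → F) → Finset (Fin n → F) :=
      fun X => univ.filter (fun w => w ∈ X ∧ w ∉ U) with hA
  have hcardA : ∀ X ∈ s, (A X).card = q ^ (k+1) - q ^ k := by
    intro X hX
    rw [hs, mem_filter] at hX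
    obtain ⟨-, hlt, hrk⟩ := hX
    have hAX : A X = (univ.filter (fun w : Fin n → F => w ∈ X))
        \ (univ.filter (fun w : Fin n → F => w ∈ U)) := by
      ext w
      simp only [hA, mem_filter, mem_sdiff, mem_univ, true_and]
    rw [hAX, Finset.card_sdiff_of_subset (by
      intro w hw
      rw [mem_filter] at hw ⊢
      exact ⟨hw.1, hlt.le hw.2⟩)]
    rw [card_filter_mem, card_filter_mem, hrk, ← hk]
  have hdisj : ∀ X₁ ∈ s, ∀ X₂ ∈ s, X₁ ≠ X₂ → Disjoint (A X₁) (A X₂) := by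
    intro X₁ h₁ X₂ h₂ hne
    rw [hs, mem_filter] at h₁ h₂
    rw [Finset.disjoint_left]
    intro w hw1 hw2
    rw [hA, mem_filter] at hw1 hw2
    apply hne
    have key : ∀ X : Submodule F (Fin n → F), U < X → Module.finrank F X = k + 1 →
        w ∈ X → w ∉ U → X = U ⊔ Submodule.span F {w} := by
      intro X hlt hrk hwX hwU
      refine (Submodule.eq_of_le_of_finrank_le ?_ ?_).symm
      · exact sup_le hlt.le ((Submodule.span_singleton_le_iff_mem w X).mpr hwX)
      · rw [rank_sup_span U w hwU, hrk]
    rw [key X₁ h₁.2.1 h₁.2.2 hw1.2.1 hw1.2.2, key X₂ h₂.2.1 h₂.2.2 hw2.2.1 hw2.2.2]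
  have hsub : s.biUnion A ⊆ univ.filter (fun w : Fin n → F => w ∉ U) := by
    intro w hw
    rw [Finset.mem_biUnion] at hw
    obtain ⟨X, -, hwX⟩ := hw
    rw [hA, mem_filter] at hwX
    rw [mem_filter]
    exact ⟨mem_univ w, hwX.2.2⟩
  have hcompl : (univ.filter (fun w : Fin n → F => w ∉ U)).card = q ^ n - q ^ k := by
    have h3 : (univ.filter (fun w : Fin n → F => w ∈ U)).card = q ^ k := card_filter_mem U
    have h4 : (univ : Finset (Fin n → F)).card = q ^ n := by
      simp [Finset.card_univ, hq]
    have h5 := Finset.card_filter_add_card_filter_not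
      (s := (univ : Finset (Fin n → F))) (p := fun w => w ∈ U)
    omega
  have hmain : s.card * (q ^ (k+1) - q ^ k) ≤ q ^ n - q ^ k := by
    calc s.card * (q ^ (k+1) - q ^ k) = ∑ X ∈ s, (A X).card := by
          rw [Finset.sum_congr rfl hcardA, Finset.sum_const, smul_eq_mul]
      _ = (s.biUnion A).card := (Finset.card_biUnion hdisj).symm
      _ ≤ (univ.filter (fun w : Fin n → F => w ∉ U)).card := Finset.card_le_card hsub
      _ = q ^ n - q ^ k := hcompl
  have hqk : 0 < q ^ k := pow_pos (by omega) k
  have e1 : q ^ (k+1) - q ^ k = q ^ k * (q - 1) := by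
    rw [pow_succ, Nat.mul_sub, Nat.mul_one]
  have e2 : q ^ n - q ^ k = q ^ k * (q ^ (n - k) - 1) := by
    rw [Nat.mul_sub, Nat.mul_one, ← pow_add]
    congr 2
    omega
  rw [e1, e2] at hmain
  have hmain2 : s.card * (q - 1) ≤ q ^ (n - k) - 1 :=
    Nat.le_of_mul_le_mul_left (by
      calc q ^ k * (s.card * (q - 1)) = s.card * (q ^ k * (q - 1)) := by ring
        _ ≤ q ^ k * (q ^ (n-k) - 1) := hmain) hqk
  calc s.card = s.card * 1 := (Nat.mul_one _).symm
    _ ≤ s.card * (q - 1) := Nat.mul_le_mul_left _ (by omega)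
    _ ≤ q ^ (n-k) - 1 := hmain2

/-- Positivity of the multiplier system. -/
lemma lam_pos (hn : 1 ≤ n) (hnl : n ≤ ℓ) :
    ∀ m : ℕ, ∀ U : Submodule F (Fin n → F), n - Module.finrank F U ≤ m →
      0 ≤ lam n ℓ d F U ∧ (Module.finrank F U < kzero n d F → 0 < lam n ℓ d F U) := by
  intro m
  induction m using Nat.strong_induction_on with
  | _ m IH =>
  intro U hU
  by_cases hk : Module.finrank F U < kzero n d F
  case neg =>
    rw [lam_of_ge U hk]
    exact ⟨le_refl 0, fun h => absurd h hk⟩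
  case pos =>
  suffices h : 0 < lam n ℓ d F U by exact ⟨h.le, fun _ => h⟩
  have hq2 : 2 ≤ Fintype.card F := Fintype.one_lt_card
  set q : ℕ := Fintype.card F with hqdef
  set Q : ℝ := (q : ℝ) ^ ℓ with hQdef
  set k := Module.finrank F U with hkdef
  set k₀ := kzero n d F with hk0def
  have hk0n : k₀ ≤ n := kzero_le_n n d F
  have hkn : k < n := lt_of_lt_of_le hk hk0n
  have hq1R : (1:ℝ) ≤ (q:ℝ) := by exact_mod_cast Nat.one_le_of_lt hq2
  have hq2R : (2:ℝ) ≤ (q:ℝ) := by exact_mod_cast hq2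
  have hQ1 : (1:ℝ) ≤ Q := one_le_pow₀ hq1R
  have hQ2 : (2:ℝ) ≤ Q := by
    calc (2:ℝ) ≤ (q:ℝ) := hq2R
      _ ≤ Q := le_self_pow₀ hq1R (by omega)
  have IH' : ∀ X : Submodule F (Fin n → F), U < X →
      0 ≤ lam n ℓ d F X ∧ (Module.finrank F X < k₀ → 0 < lam n ℓ d F X) := by
    intro X hX
    have h1 : k < Module.finrank F X := Submodule.finrank_lt_finrank_of_lt hX
    have h2 : Module.finrank F X ≤ n := by simpa using Submodule.finrank_le X
    exact IH (n - Module.finrank F X) (by omega) X le_rfl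
  set t := k₀ - k with htdef
  have ht1 : 1 ≤ t := by omega
  rw [lam_of_lt U hk, ← hkdef, ← hk0def, ← hQdef, ← htdef]
  by_cases hcase : k + 1 = k₀
  · have hzero : ∀ X ∈ univ.filter (fun X : Submodule F (Fin n → F) => U < X),
        lam n ℓ d F X = 0 := by
      intro X hX
      rw [mem_filter] at hX
      have h1 : k < Module.finrank F X := Submodule.finrank_lt_finrank_of_lt hX.2
      exact lam_of_ge X (by omega)
    rw [Finset.sum_eq_zero hzero]
    have ht : t = 1 := by omega
    rw [ht, pow_one]
    linarith
  · have ht2 : 2 ≤ t := by omega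
    have hk1 : k + 1 < k₀ := by omega
    set T₁ := univ.filter (fun X : Submodule F (Fin n → F) =>
        U < X ∧ Module.finrank F X = k + 1) with hT₁
    set T₂ := univ.filter (fun X : Submodule F (Fin n → F) =>
        U < X ∧ Module.finrank F X ≠ k + 1) with hT₂
    have hsplit : ∑ X ∈ univ.filter (fun X : Submodule F (Fin n → F) => U < X),
        lam n ℓ d F X = ∑ X ∈ T₁, lam n ℓ d F X + ∑ X ∈ T₂, lam n ℓ d F X := by
      rw [hT₁, hT₂, ← Finset.filter_filter, ← Finset.filter_filter,
        Finset.sum_filter_add_sum_filter_not]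
    have hexp : ∀ X ∈ T₁, lam n ℓ d F X = (Q ^ (t-1) - 1) -
        ∑ Y ∈ univ.filter (fun Y : Submodule F (Fin n → F) => X < Y), lam n ℓ d F Y := by
      intro X hX
      rw [hT₁, mem_filter] at hX
      have he : kzero n d F - (k + 1) = t - 1 := by omega
      rw [lam_of_lt X (by omega : Module.finrank F X < kzero n d F), hX.2.2, he]
    have hsum1 : ∑ X ∈ T₁, lam n ℓ d F X = (T₁.card : ℝ) * (Q ^ (t-1) - 1) -
        ∑ X ∈ T₁, ∑ Y ∈ univ.filter (fun Y : Submodule F (Fin n → F) => X < Y),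
          lam n ℓ d F Y := by
      rw [Finset.sum_congr rfl hexp, Finset.sum_sub_distrib, Finset.sum_const,
        nsmul_eq_mul]
    have hW : ∑ X ∈ T₂, lam n ℓ d F X ≤
        ∑ X ∈ T₁, ∑ Y ∈ univ.filter (fun Y : Submodule F (Fin n → F) => X < Y),
          lam n ℓ d F Y := by
      have e2 : ∑ X ∈ T₂, lam n ℓ d F X = ∑ Y : Submodule F (Fin n → F),
          (if U < Y ∧ Module.finrank F Y ≠ k + 1 then lam n ℓ d F Y else 0) := by
        rw [hT₂, Finset.sum_filter]
      have eW : ∑ X ∈ T₁, ∑ Y ∈ univ.filter (fun Y : Submodule F (Fin n → F) => X < Y),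
            lam n ℓ d F Y
          = ∑ Y : Submodule F (Fin n → F), ∑ X ∈ T₁,
            (if X < Y then lam n ℓ d F Y else 0) := by
        rw [Finset.sum_comm]
        exact Finset.sum_congr rfl (fun X _ => Finset.sum_filter _ _)
      rw [e2, eW]
      apply Finset.sum_le_sum
      intro Y _
      by_cases hUY : U < Y
      · have hY0 : 0 ≤ lam n ℓ d F Y := (IH' Y hUY).1
        by_cases hrk : Module.finrank F Y = k + 1
        · rw [if_neg (by tauto)]
          exact Finset.sum_nonneg (fun X _ => by positivity)
        · rw [if_pos ⟨hUY, hrk⟩]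
          obtain ⟨w, hwY, hwU⟩ := SetLike.exists_of_lt hUY
          set X₀ := U ⊔ Submodule.span F {w} with hX₀def
          have hX₀rk : Module.finrank F X₀ = k + 1 := rank_sup_span U w hwU
          have hX₀mem : X₀ ∈ T₁ := by
            rw [hT₁, mem_filter]
            exact ⟨mem_univ _, lt_sup_span U w hwU, hX₀rk⟩
          have hX₀Y : X₀ < Y := by
            have hle : X₀ ≤ Y :=
              sup_le hUY.le ((Submodule.span_singleton_le_iff_mem w Y).mpr hwY)
            refine lt_of_le_of_ne hle (fun h => ?_)
            rw [h] at hX₀rk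
            exact hrk hX₀rk
          have := Finset.single_le_sum
            (f := fun X : Submodule F (Fin n → F) => if X < Y then lam n ℓ d F Y else 0)
            (fun X _ => by positivity) hX₀mem
          simpa [hX₀Y] using this
      · rw [if_neg (by tauto)]
        apply le_of_eq
        symm
        apply Finset.sum_eq_zero
        intro X hX
        rw [hT₁, mem_filter] at hX
        rw [if_neg (fun h => hUY (lt_trans hX.2.1 h))]
    have hc₁ : (T₁.card : ℝ) ≤ Q - 1 := by
      have h1 : T₁.card ≤ q ^ (n - k) - 1 := covers_card_le U
      have h2 : (1:ℕ) ≤ q ^ (n-k) := Nat.one_le_pow _ _ (by omega)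
      have h3 : (T₁.card : ℝ) ≤ (q:ℝ) ^ (n-k) - 1 := by
        have := (Nat.cast_le (α := ℝ)).mpr h1
        rwa [Nat.cast_sub h2, Nat.cast_pow, Nat.cast_one] at this
      have h4 : (q:ℝ) ^ (n-k) ≤ Q := pow_le_pow_right₀ hq1R (by omega)
      linarith
    have hQt1 : (1:ℝ) ≤ Q ^ (t-1) := one_le_pow₀ hQ1
    have hbound : ∑ X ∈ univ.filter (fun X : Submodule F (Fin n → F) => U < X),
        lam n ℓ d F X ≤ (Q - 1) * (Q ^ (t-1) - 1) := by
      rw [hsplit, hsum1]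
      have : (T₁.card : ℝ) * (Q ^ (t-1) - 1) ≤ (Q - 1) * (Q ^ (t-1) - 1) :=
        mul_le_mul_of_nonneg_right hc₁ (by linarith)
      linarith
    have hQt : Q ^ (t-1) * Q = Q ^ t := by
      rw [← pow_succ]
      congr 1
      omega
    nlinarith [hbound, hQ2, hQt1, hQt]

lemma sum_le_split (f : Submodule F (Fin n → F) → ℝ) (S : Submodule F (Fin n → F)) :
    ∑ U : Submodule F (Fin n → F), (if S ≤ U then f U else 0)
      = f S + ∑ U ∈ univ.filter (fun U : Submodule F (Fin n → F) => S < U), f U := by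
  rw [← Finset.sum_filter]
  have e2 : univ.filter (fun U : Submodule F (Fin n → F) => S ≤ U)
      = insert S (univ.filter (fun U : Submodule F (Fin n → F) => S < U)) := by
    ext U
    simp only [mem_filter, mem_univ, true_and, mem_insert]
    constructor
    · intro h
      rcases eq_or_lt_of_le h with h' | h'
      · exact Or.inl h'.symm
      · exact Or.inr h'
    · rintro (rfl | h)
      · exact le_rfl
      · exact h.le
  rw [e2, Finset.sum_insert (by simp)]

lemma sum_ge_split (f : Submodule F (Fin n → F) → ℝ) (S : Submodule F (Fin n → F)) :
    ∑ T : Submodule F (Fin n → F), (if T ≤ S then f T else 0)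
      = f S + ∑ T ∈ univ.filter (fun T : Submodule F (Fin n → F) => T < S), f T := by
  rw [← Finset.sum_filter]
  have e2 : univ.filter (fun T : Submodule F (Fin n → F) => T ≤ S)
      = insert S (univ.filter (fun T : Submodule F (Fin n → F) => T < S)) := by
    ext T
    simp only [mem_filter, mem_univ, true_and, mem_insert]
    constructor
    · intro h
      rcases eq_or_lt_of_le h with h' | h'
      · exact Or.inl h'
      · exact Or.inr h'
    · rintro (rfl | h)
      · exact le_rfl
      · exact h.le
  rw [e2, Finset.sum_insert (by simp)]

/-- The key telescoping identity for `lam`. -/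
lemma lam_sum (S : Submodule F (Fin n → F)) :
    ∑ U : Submodule F (Fin n → F), (if S ≤ U then lam n ℓ d F U else 0)
      = if Module.finrank F S < kzero n d F then
          ((Fintype.card F : ℝ) ^ ℓ) ^ (kzero n d F - Module.finrank F S) - 1
        else 0 := by
  rw [sum_le_split]
  by_cases h : Module.finrank F S < kzero n d F
  · rw [if_pos h, lam_of_lt S h]
    ring
  · rw [if_neg h, lam_of_ge S h, Finset.sum_eq_zero, add_zero]
    intro U hU
    rw [mem_filter] at hU
    have := Submodule.finrank_lt_finrank_of_lt hU.2
    exact lam_of_ge U (by omega)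

lemma p_zero_of_B_zero (p : Submodule F (Fin n → F) → ℝ)
    (hB : ∀ U : Submodule F (Fin n → F), Module.finrank F U < kzero n d F →
      (∑ T : Submodule F (Fin n → F),
        if T ≤ U then (Fintype.card T : ℝ) ^ ℓ * p T else 0) = 0) :
    ∀ m : ℕ, ∀ S : Submodule F (Fin n → F), Module.finrank F S ≤ m →
      Module.finrank F S < kzero n d F → p S = 0 := by
  intro m
  induction m using Nat.strong_induction_on with
  | _ m IH =>
  intro S hm hk
  have h0 := hB S hk
  rw [sum_ge_split (fun T => (Fintype.card T : ℝ) ^ ℓ * p T) S] at h0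
  have hrest : ∑ T ∈ univ.filter (fun T : Submodule F (Fin n → F) => T < S),
      (Fintype.card T : ℝ) ^ ℓ * p T = 0 := by
    apply Finset.sum_eq_zero
    intro T hT
    rw [mem_filter] at hT
    have h1 : Module.finrank F T < Module.finrank F S :=
      Submodule.finrank_lt_finrank_of_lt hT.2
    rw [IH (Module.finrank F T) (by omega) T le_rfl (by omega), mul_zero]
  rw [hrest, add_zero] at h0
  have hpos : (0:ℝ) < (Fintype.card S : ℝ) ^ ℓ := by
    have : 0 < Fintype.card S := Fintype.card_pos
    positivity
  rcases mul_eq_zero.mp h0 with h | h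
  · exact absurd h (ne_of_gt hpos)
  · exact h

end Aux

/-- **Optimum solutions are integral (Theorem 3.6, structure of optima).**
For `ℓ ≥ n`, any maximizer of `∑_S |S|^ℓ p S` over the dimension-constrained
pseudoprobability program is a probability distribution supported on
subspaces of dimension exactly `k₀`. -/
theorem optimum_solutions_integral
    (n ℓ d : ℕ) (hn : 1 ≤ n) (hd : 1 ≤ d) (hdn : d ≤ n) (hnl : n ≤ ℓ)
    (F : Type) [Field F] [Fintype F]
    (p : Submodule F (Fin n → F) → ℝ)
    (hfeas : PseudoFeasibleDim n ℓ d F p)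
    (hopt : ∀ p' : Submodule F (Fin n → F) → ℝ, PseudoFeasibleDim n ℓ d F p' →
      (∑ S : Submodule F (Fin n → F), (Fintype.card S : ℝ) ^ ℓ * p' S)
        ≤ ∑ S : Submodule F (Fin n → F), (Fintype.card S : ℝ) ^ ℓ * p S) :
    (∀ S : Submodule F (Fin n → F), 0 ≤ p S) ∧
    (∑ S : Submodule F (Fin n → F), p S) = 1 ∧
    (∀ S : Submodule F (Fin n → F), Module.finrank F S ≠ kzero n d F → p S = 0) := by
  open Finset in
  obtain ⟨hsum1, hdim, hFourier, hnn⟩ := hfeas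
  set q : ℕ := Fintype.card F with hqdef
  set Q : ℝ := (q : ℝ) ^ ℓ with hQdef
  set k₀ := kzero n d F with hk0def
  have hw : ∀ S : Submodule F (Fin n → F),
      (Fintype.card S : ℝ) ^ ℓ = Q ^ (Module.finrank F S) := by
    intro S
    rw [Module.card_eq_pow_finrank (K := F) (V := S), hQdef]
    push_cast
    rw [← pow_mul, ← pow_mul, mul_comm]
  obtain ⟨C₀, hC₀good, hC₀rk⟩ := kzero_mem n d F
  -- the integral solution δ is feasible
  set δ : Submodule F (Fin n → F) → ℝ := fun S => if S = C₀ then 1 else 0 with hδdef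
  have hδnonneg : ∀ S, 0 ≤ δ S := by
    intro S
    rw [hδdef]
    dsimp only
    split_ifs <;> norm_num
  have hδfeas : PseudoFeasibleDim n ℓ d F δ := by
    refine ⟨?_, ?_, ?_, ?_⟩
    · rw [hδdef]
      simp
    · intro S hS
      rw [hδdef]
      dsimp only
      rw [if_neg (fun h => by
        rw [h, hC₀rk] at hS
        exact lt_irrefl _ hS)]
    · intro U
      apply Finset.sum_nonneg
      intro S _
      split_ifs
      · exact mul_nonneg (by positivity) (hδnonneg S)
      · exact le_rfl
    · intro U
      apply Finset.sum_nonneg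
      intro S _
      split_ifs
      · exact hδnonneg S
      · exact le_rfl
  have hobjδ : ∑ S : Submodule F (Fin n → F), (Fintype.card S : ℝ) ^ ℓ * δ S = Q ^ k₀ := by
    rw [hδdef]
    simp only [mul_ite, mul_one, mul_zero]
    rw [Finset.sum_ite_eq' Finset.univ C₀ (fun S => (Fintype.card S : ℝ) ^ ℓ)]
    rw [if_pos (Finset.mem_univ C₀), hw C₀, hC₀rk]
  have hlow : Q ^ k₀ ≤ ∑ S : Submodule F (Fin n → F), (Fintype.card S : ℝ) ^ ℓ * p S := by
    rw [← hobjδ]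
    exact hopt δ hδfeas
  -- multipliers
  have hlam0 : ∀ U : Submodule F (Fin n → F), 0 ≤ lam n ℓ d F U :=
    fun U => (lam_pos hn hnl _ U le_rfl).1
  have hlampos : ∀ U : Submodule F (Fin n → F), Module.finrank F U < k₀ →
      0 < lam n ℓ d F U :=
    fun U h => (lam_pos hn hnl _ U le_rfl).2 h
  -- the master identity
  have hT : ∑ U : Submodule F (Fin n → F), lam n ℓ d F U *
        (∑ S : Submodule F (Fin n → F),
          if S ≤ U then (Fintype.card S : ℝ) ^ ℓ * p S else 0)
      = Q ^ k₀ - ∑ S : Submodule F (Fin n → F), (Fintype.card S : ℝ) ^ ℓ * p S := by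
    calc ∑ U : Submodule F (Fin n → F), lam n ℓ d F U *
          (∑ S : Submodule F (Fin n → F),
            if S ≤ U then (Fintype.card S : ℝ) ^ ℓ * p S else 0)
        = ∑ U : Submodule F (Fin n → F), ∑ S : Submodule F (Fin n → F),
            (if S ≤ U then (Fintype.card S : ℝ) ^ ℓ * p S * lam n ℓ d F U else 0) := by
          apply Finset.sum_congr rfl
          intro U _
          rw [Finset.mul_sum]
          apply Finset.sum_congr rfl
          intro S _
          rw [mul_ite, mul_zero, mul_comm]
      _ = ∑ S : Submodule F (Fin n → F), ∑ U : Submodule F (Fin n → F),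
            (if S ≤ U then (Fintype.card S : ℝ) ^ ℓ * p S * lam n ℓ d F U else 0) :=
          Finset.sum_comm
      _ = ∑ S : Submodule F (Fin n → F), (Fintype.card S : ℝ) ^ ℓ * p S *
            (∑ U : Submodule F (Fin n → F), if S ≤ U then lam n ℓ d F U else 0) := by
          apply Finset.sum_congr rfl
          intro S _
          rw [Finset.mul_sum]
          apply Finset.sum_congr rfl
          intro U _
          rw [mul_ite, mul_zero]
      _ = ∑ S : Submodule F (Fin n → F),
            (Q ^ k₀ * p S - (Fintype.card S : ℝ) ^ ℓ * p S) := by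
          apply Finset.sum_congr rfl
          intro S _
          rw [lam_sum S, ← hk0def, ← hQdef]
          rcases lt_trichotomy (Module.finrank F S) k₀ with h | h | h
          · rw [if_pos h, hw S]
            have hqq : Q ^ (Module.finrank F S) * Q ^ (k₀ - Module.finrank F S)
                = Q ^ k₀ := by
              rw [← pow_add]
              congr 1
              omega
            linear_combination p S * hqq
          · rw [if_neg (by omega), hw S, h]
            ring
          · rw [if_neg (by omega), hdim S h]
            ring
      _ = Q ^ k₀ * (∑ S : Submodule F (Fin n → F), p S)
            - ∑ S : Submodule F (Fin n → F), (Fintype.card S : ℝ) ^ ℓ * p S := by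
          rw [Finset.sum_sub_distrib, Finset.mul_sum]
      _ = Q ^ k₀ - ∑ S : Submodule F (Fin n → F), (Fintype.card S : ℝ) ^ ℓ * p S := by
          rw [hsum1, mul_one]
  have hT0 : 0 ≤ ∑ U : Submodule F (Fin n → F), lam n ℓ d F U *
      (∑ S : Submodule F (Fin n → F),
        if S ≤ U then (Fintype.card S : ℝ) ^ ℓ * p S else 0) :=
    Finset.sum_nonneg (fun U _ => mul_nonneg (hlam0 U) (hFourier U))
  have hTzero : ∑ U : Submodule F (Fin n → F), lam n ℓ d F U *
      (∑ S : Submodule F (Fin n → F),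
        if S ≤ U then (Fintype.card S : ℝ) ^ ℓ * p S else 0) = 0 := by
    have h1 : ∑ S : Submodule F (Fin n → F), (Fintype.card S : ℝ) ^ ℓ * p S = Q ^ k₀ := by
      rw [hT] at hT0
      linarith
    rw [hT, h1]
    ring
  have hBzero : ∀ U : Submodule F (Fin n → F), Module.finrank F U < k₀ →
      (∑ S : Submodule F (Fin n → F),
        if S ≤ U then (Fintype.card S : ℝ) ^ ℓ * p S else 0) = 0 := by
    intro U hU
    have hterm := (Finset.sum_eq_zero_iff_of_nonneg
      (fun U _ => mul_nonneg (hlam0 U) (hFourier U))).mp hTzero U (Finset.mem_univ U)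
    rcases mul_eq_zero.mp hterm with h | h
    · exact absurd h (ne_of_gt (hlampos U hU))
    · exact h
  have hpzero : ∀ S : Submodule F (Fin n → F), Module.finrank F S < k₀ → p S = 0 :=
    fun S h => p_zero_of_B_zero p hBzero (Module.finrank F S) S le_rfl h
  refine ⟨?_, hsum1, ?_⟩
  · intro S
    rcases lt_trichotomy (Module.finrank F S) k₀ with h | h | h
    · rw [hpzero S h]
    · have h4 := hnn S
      rw [sum_le_split p S] at h4
      have h5 : ∑ T ∈ Finset.univ.filter
          (fun T : Submodule F (Fin n → F) => S < T), p T = 0 := by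
        apply Finset.sum_eq_zero
        intro T hT
        rw [Finset.mem_filter] at hT
        have := Submodule.finrank_lt_finrank_of_lt hT.2
        exact hdim T (by omega)
      rw [h5, add_zero] at h4
      exact h4
    · rw [hdim S h]
  · intro S hne
    rcases lt_or_gt_of_ne hne with h | h
    · exact hpzero S h
    · exact hdim S h
end
end

section
/- Exact completeness of the Krawtchouk hierarchy at level n (Theorem 1.2, pseudoprobability form): assume ℓ ≥ n. Then q^(k₀·ℓ) is the greatest element of the set {∑_S |S|^ℓ · p(S) : p feasible for the distance-constrained pseudoprobability program at level ℓ}; that is, every feasible p satisfies ∑_S |S|^ℓ · p(S) ≤ q^(k₀·ℓ), and some feasible p attains this value (so the optimum value of the LP equals A_q^Lin(n,d)^ℓ = q^(k₀·ℓ)). -/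
open Classical

noncomputable section

def GG (q : ℝ) (ℓ k₀ m : ℕ) : ℝ := if m < k₀ then q ^ ((k₀ - m) * ℓ) - 1 else 0

lemma GG_nonneg {q : ℝ} (hq : 1 ≤ q) (ℓ k₀ m : ℕ) : 0 ≤ GG q ℓ k₀ m := by
  unfold GG
  split
  · simpa [sub_nonneg] using one_le_pow₀ hq (n := (k₀ - m) * ℓ)
  · exact le_refl _

variable (n ℓ k₀ : ℕ) (F : Type) [Field F] [Fintype F]

lemma card_upper_lt {U V : Submodule F (Fin n → F)} (h : U < V) :
    (Finset.univ.filter fun W : Submodule F (Fin n → F) => V < W).card <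
      (Finset.univ.filter fun W : Submodule F (Fin n → F) => U < W).card := by
  apply Finset.card_lt_card
  rw [Finset.ssubset_iff_of_subset]
  · exact ⟨V, by simp [h], by simp⟩
  · intro W hW
    simp only [Finset.mem_filter, Finset.mem_univ, true_and] at hW ⊢
    exact h.trans hW

def FF (U : Submodule F (Fin n → F)) : ℝ :=
  GG (Fintype.card F) ℓ k₀ (Module.finrank F U) -
    ∑ V ∈ (Finset.univ.filter fun V => U < V).attach, FF V.1
termination_by (Finset.univ.filter fun V => U < V).card
decreasing_by
  have hV := V.2
  simp only [Finset.mem_filter, Finset.mem_univ, true_and] at hV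
  exact card_upper_lt n F hV

lemma FF_def (U : Submodule F (Fin n → F)) :
    FF n ℓ k₀ F U = GG (Fintype.card F) ℓ k₀ (Module.finrank F U) -
      ∑ V ∈ Finset.univ.filter (fun V => U < V), FF n ℓ k₀ F V := by
  rw [FF, Finset.sum_attach]

lemma sum_upper (U : Submodule F (Fin n → F)) :
    ∑ V ∈ Finset.univ.filter (fun V => U ≤ V), FF n ℓ k₀ F V =
      GG (Fintype.card F) ℓ k₀ (Module.finrank F U) := by
  have h : Finset.univ.filter (fun V : Submodule F (Fin n → F) => U ≤ V) =
      insert U (Finset.univ.filter (fun V => U < V)) := by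
    ext V
    simp only [Finset.mem_filter, Finset.mem_univ, true_and, Finset.mem_insert]
    constructor
    · intro hUV
      rcases eq_or_lt_of_le hUV with h | h
      · exact Or.inl h.symm
      · exact Or.inr h
    · rintro (rfl | h)
      · exact le_refl _
      · exact h.le
  rw [h, Finset.sum_insert (by simp), FF_def]
  ring

lemma exists_cover {U V : Submodule F (Fin n → F)} (h : U < V) :
    ∃ W : Submodule F (Fin n → F),
      U < W ∧ Module.finrank F W = Module.finrank F U + 1 ∧ W ≤ V := by
  obtain ⟨x, hxV, hxU⟩ := SetLike.exists_of_lt h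
  have hx0 : x ≠ 0 := fun h0 => hxU (h0 ▸ U.zero_mem)
  refine ⟨U ⊔ Submodule.span F {x}, ?_, ?_, ?_⟩
  · refine lt_of_le_of_ne le_sup_left (fun hEq => hxU ?_)
    rw [hEq]
    exact Submodule.mem_sup_right (Submodule.mem_span_singleton_self x)
  · have hinf : U ⊓ Submodule.span F {x} = ⊥ := by
      rw [eq_bot_iff]
      rintro y hy
      obtain ⟨hyU, hySpan⟩ := Submodule.mem_inf.mp hy
      obtain ⟨c, rfl⟩ := Submodule.mem_span_singleton.mp hySpan
      rcases eq_or_ne c 0 with rfl | hc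
      · simp
      · exact absurd (by simpa [hc] using U.smul_mem c⁻¹ hyU) hxU
    have hsum := Submodule.finrank_sup_add_finrank_inf_eq U (Submodule.span F {x})
    rw [hinf, finrank_bot, finrank_span_singleton hx0] at hsum
    omega
  · exact sup_le h.le (Submodule.span_le.mpr (by simpa using hxV))

lemma cov_card_le (U : Submodule F (Fin n → F)) :
    (Finset.univ.filter fun W : Submodule F (Fin n → F) =>
      U < W ∧ Module.finrank F W = Module.finrank F U + 1).card ≤
      Fintype.card (Fin n → F) := by
  set cov := Finset.univ.filter fun W : Submodule F (Fin n → F) =>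
      U < W ∧ Module.finrank F W = Module.finrank F U + 1 with hcov
  set f : Submodule F (Fin n → F) → (Fin n → F) := fun W =>
    if h : U < W then Classical.choose (SetLike.exists_of_lt h) else 0 with hf
  have hW_eq : ∀ W ∈ cov, U ⊔ Submodule.span F {f W} = W := by
    intro W hW
    simp only [hcov, Finset.mem_filter, Finset.mem_univ, true_and] at hW
    obtain ⟨hUW, hWrank⟩ := hW
    have hspec := Classical.choose_spec (SetLike.exists_of_lt hUW)
    obtain ⟨hxW, hxU⟩ := hspec
    have hfW : f W = Classical.choose (SetLike.exists_of_lt hUW) := by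
      rw [hf]; exact dif_pos hUW
    set x := Classical.choose (SetLike.exists_of_lt hUW)
    have hle : U ⊔ Submodule.span F {x} ≤ W :=
      sup_le hUW.le (Submodule.span_le.mpr (by simpa using hxW))
    have hlt : U < U ⊔ Submodule.span F {x} :=
      lt_of_le_of_ne le_sup_left (fun hEq => hxU (hEq ▸ Submodule.mem_sup_right (Submodule.mem_span_singleton_self x)))
    have hrk : Module.finrank F U < Module.finrank F (U ⊔ Submodule.span F {x} : _) :=
      Submodule.finrank_lt_finrank_of_lt hlt
    have := Submodule.eq_of_le_of_finrank_le hle (by omega)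
    rw [hfW]
    exact this
  have hinj : Set.InjOn f cov := by
    intro W hW W' hW' hEq
    rw [← hW_eq W hW, ← hW_eq W' hW', hEq]
  calc cov.card ≤ Finset.univ.card :=
        Finset.card_le_card_of_injOn f (fun _ _ => Finset.mem_univ _) (by
          intro a ha b hb h
          exact hinj (by simpa using ha) (by simpa using hb) h)
    _ = Fintype.card (Fin n → F) := Finset.card_univ
lemma FF_nonneg_aux (hnl : n ≤ ℓ) :
    ∀ (m : ℕ) (U : Submodule F (Fin n → F)),
      (Finset.univ.filter fun V => U < V).card ≤ m →
      0 ≤ FF n ℓ k₀ F U ∧ (k₀ ≤ Module.finrank F U → FF n ℓ k₀ F U = 0) := by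
  have hq : (1 : ℝ) ≤ (Fintype.card F : ℝ) := by
    exact_mod_cast Nat.one_le_iff_ne_zero.mpr (Fintype.card_ne_zero (α := F))
  intro m
  induction m with
  | zero =>
    intro U hU
    have hfe : (Finset.univ.filter fun V : Submodule F (Fin n → F) => U < V) = ∅ :=
      Finset.card_eq_zero.mp (Nat.le_zero.mp hU)
    have hFF : FF n ℓ k₀ F U = GG (Fintype.card F) ℓ k₀ (Module.finrank F U) := by
      rw [FF_def, hfe]; simp
    constructor
    · rw [hFF]; exact GG_nonneg hq ℓ k₀ _
    · intro hk
      rw [hFF]; unfold GG; rw [if_neg (by omega)]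
  | succ m ih =>
    intro U hU
    have hrec : ∀ V : Submodule F (Fin n → F), U < V →
        0 ≤ FF n ℓ k₀ F V ∧ (k₀ ≤ Module.finrank F V → FF n ℓ k₀ F V = 0) := by
      intro V hV
      exact ih V (Nat.lt_succ_iff.mp (lt_of_lt_of_le (card_upper_lt n F hV) hU))
    by_cases hk : k₀ ≤ Module.finrank F U
    · have hz : FF n ℓ k₀ F U = 0 := by
        rw [FF_def]
        have h1 : GG (Fintype.card F) ℓ k₀ (Module.finrank F U) = 0 := by
          unfold GG; rw [if_neg (by omega)]
        have h2 : ∑ V ∈ Finset.univ.filter (fun V => U < V), FF n ℓ k₀ F V = 0 := by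
          apply Finset.sum_eq_zero
          intro V hV
          simp only [Finset.mem_filter, Finset.mem_univ, true_and] at hV
          exact (hrec V hV).2 (le_trans hk (Submodule.finrank_lt_finrank_of_lt hV).le)
        rw [h1, h2]; ring
      exact ⟨hz.ge, fun _ => hz⟩
    · have hu : Module.finrank F U < k₀ := lt_of_not_ge hk
      set q : ℝ := (Fintype.card F : ℝ) with hqdef
      set u := Module.finrank F U with hudef
      set cov := Finset.univ.filter fun W : Submodule F (Fin n → F) =>
        U < W ∧ Module.finrank F W = u + 1 with hcovdef
      set filt := Finset.univ.filter fun V : Submodule F (Fin n → F) => U < V with hfiltdef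
      have step1 : ∑ V ∈ filt, FF n ℓ k₀ F V ≤ (cov.card : ℝ) * GG q ℓ k₀ (u + 1) := by
        calc ∑ V ∈ filt, FF n ℓ k₀ F V
            ≤ ∑ V ∈ filt, ∑ W ∈ cov, (if W ≤ V then FF n ℓ k₀ F V else 0) := by
              apply Finset.sum_le_sum
              intro V hV
              have hUV : U < V := by
                simpa [hfiltdef] using hV
              have hF : 0 ≤ FF n ℓ k₀ F V := (hrec V hUV).1
              have hcard : 1 ≤ (cov.filter fun W => W ≤ V).card := by
                rw [Nat.one_le_iff_ne_zero, ← Nat.pos_iff_ne_zero, Finset.card_pos]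
                obtain ⟨W, hW1, hW2, hW3⟩ := exists_cover n F hUV
                exact ⟨W, by simp [hcovdef, hW1, hW2, hW3, hudef]⟩
              calc FF n ℓ k₀ F V = 1 * FF n ℓ k₀ F V := (one_mul _).symm
                _ ≤ ((cov.filter fun W => W ≤ V).card : ℝ) * FF n ℓ k₀ F V :=
                    mul_le_mul_of_nonneg_right (by exact_mod_cast hcard) hF
                _ = ∑ W ∈ cov, (if W ≤ V then FF n ℓ k₀ F V else 0) := by
                    rw [← Finset.sum_filter, Finset.sum_const, nsmul_eq_mul]
          _ = ∑ W ∈ cov, ∑ V ∈ filt, (if W ≤ V then FF n ℓ k₀ F V else 0) :=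
              Finset.sum_comm
          _ = ∑ W ∈ cov, GG q ℓ k₀ (u + 1) := by
              apply Finset.sum_congr rfl
              intro W hW
              simp only [hcovdef, Finset.mem_filter, Finset.mem_univ, true_and] at hW
              obtain ⟨hUW, hWrank⟩ := hW
              have hfilt_eq : filt.filter (fun V => W ≤ V) =
                  Finset.univ.filter (fun V => W ≤ V) := by
                rw [hfiltdef, Finset.filter_filter]
                apply Finset.filter_congr
                intro V _
                constructor
                · exact fun h => h.2
                · exact fun h => ⟨lt_of_lt_of_le hUW h, h⟩
              rw [← Finset.sum_filter, hfilt_eq, sum_upper, hWrank]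
          _ = (cov.card : ℝ) * GG q ℓ k₀ (u + 1) := by
              rw [Finset.sum_const, nsmul_eq_mul]
      have hcov : (cov.card : ℝ) ≤ q ^ ℓ := by
        have h1 : cov.card ≤ Fintype.card (Fin n → F) := cov_card_le n F U
        have h2 : Fintype.card (Fin n → F) = Fintype.card F ^ n := by
          simp [Fintype.card_fun]
        have h3 : Fintype.card F ^ n ≤ Fintype.card F ^ ℓ :=
          Nat.pow_le_pow_right Fintype.card_pos hnl
        have : cov.card ≤ Fintype.card F ^ ℓ := by omega
        calc (cov.card : ℝ) ≤ ((Fintype.card F ^ ℓ : ℕ) : ℝ) := by exact_mod_cast this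
          _ = q ^ ℓ := by push_cast; rfl
      have harith : 0 ≤ GG q ℓ k₀ u - q ^ ℓ * GG q ℓ k₀ (u + 1) := by
        by_cases h2 : u + 1 < k₀
        · have e1 : GG q ℓ k₀ u = q ^ ((k₀ - u) * ℓ) - 1 := if_pos hu
          have e2 : GG q ℓ k₀ (u + 1) = q ^ ((k₀ - (u + 1)) * ℓ) - 1 := if_pos h2
          have e3 : ℓ + (k₀ - (u + 1)) * ℓ = (k₀ - u) * ℓ := by
            have h4 : 1 + (k₀ - (u + 1)) = k₀ - u := by omega
            calc ℓ + (k₀ - (u + 1)) * ℓ = (1 + (k₀ - (u + 1))) * ℓ := by ring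
              _ = (k₀ - u) * ℓ := by rw [h4]
          have e4 : q ^ ℓ * (q ^ ((k₀ - (u + 1)) * ℓ) - 1) = q ^ ((k₀ - u) * ℓ) - q ^ ℓ := by
            rw [mul_sub, ← pow_add, e3]; ring
          rw [e1, e2, e4]
          have := one_le_pow₀ hq (n := ℓ)
          linarith
        · have e2 : GG q ℓ k₀ (u + 1) = 0 := if_neg (by omega)
          rw [e2]
          simpa using GG_nonneg hq ℓ k₀ u
      have hGGpos : 0 ≤ GG q ℓ k₀ (u + 1) := GG_nonneg hq ℓ k₀ (u + 1)
      have hT : ∑ V ∈ filt, FF n ℓ k₀ F V ≤ q ^ ℓ * GG q ℓ k₀ (u + 1) :=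
        le_trans step1 (mul_le_mul_of_nonneg_right hcov hGGpos)
      constructor
      · rw [FF_def]
        have : GG (Fintype.card F) ℓ k₀ (Module.finrank F U) = GG q ℓ k₀ u := rfl
        rw [this]
        linarith
      · intro h; omega

theorem kraw_exact_completeness'
    (n ℓ d : ℕ) (hn : 1 ≤ n) (hd : 1 ≤ d) (hdn : d ≤ n) (hnl : n ≤ ℓ)
    (F : Type) [Field F] [Fintype F] :
    IsGreatest
      {v : ℝ | ∃ p : Submodule F (Fin n → F) → ℝ, PseudoFeasibleDist n ℓ d F p ∧
        v = ∑ S : Submodule F (Fin n → F), (Fintype.card S : ℝ) ^ ℓ * p S}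
      ((Fintype.card F : ℝ) ^ (kzero n d F * ℓ)) := by
  classical
  set q : ℝ := (Fintype.card F : ℝ) with hqdef
  set k₀ := kzero n d F with hk₀def
  have hq1 : (1 : ℝ) ≤ q := by
    rw [hqdef]
    exact_mod_cast Nat.one_le_iff_ne_zero.mpr (Fintype.card_ne_zero (α := F))
  have hbdd : BddAbove {k : ℕ | ∃ C : Submodule F (Fin n → F),
      MinDistGe n d F C ∧ Module.finrank F C = k} := by
    refine ⟨Module.finrank F (Fin n → F), ?_⟩
    rintro k ⟨C, -, rfl⟩
    exact Submodule.finrank_le C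
  have hne : Set.Nonempty {k : ℕ | ∃ C : Submodule F (Fin n → F),
      MinDistGe n d F C ∧ Module.finrank F C = k} := by
    refine ⟨0, ⊥, ?_, finrank_bot F _⟩
    intro w hw hw0
    exact absurd ((Submodule.mem_bot F).mp hw) hw0
  have hk₀mem : k₀ ∈ {k : ℕ | ∃ C : Submodule F (Fin n → F),
      MinDistGe n d F C ∧ Module.finrank F C = k} := Nat.sSup_mem hne hbdd
  obtain ⟨C₀, hC₀dist, hC₀rank⟩ := hk₀mem
  constructor
  · -- attainment
    refine ⟨fun S => if S = C₀ then 1 else 0, ⟨?_, ?_, ?_, ?_⟩, ?_⟩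
    · simp
    · rintro S ⟨w, hwS, hw0, hwt⟩
      show (if S = C₀ then (1:ℝ) else 0) = 0
      rw [if_neg]
      rintro rfl
      have := hC₀dist w hwS hw0
      omega
    · intro U
      apply Finset.sum_nonneg
      intro S _
      dsimp only
      split_ifs <;> positivity
    · intro U
      apply Finset.sum_nonneg
      intro S _
      dsimp only
      split_ifs <;> norm_num
    · have hcard : (Fintype.card C₀ : ℝ) = q ^ k₀ := by
        rw [Module.card_eq_pow_finrank (K := F) (V := C₀), hC₀rank]
        push_cast
        rfl
      have hsum : ∑ S : Submodule F (Fin n → F),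
          (Fintype.card S : ℝ) ^ ℓ * (if S = C₀ then (1 : ℝ) else 0) =
          (Fintype.card C₀ : ℝ) ^ ℓ := by
        rw [Finset.sum_congr rfl (fun S _ => by rw [mul_ite, mul_one, mul_zero]),
          Finset.sum_ite_eq' Finset.univ C₀ (fun S => (Fintype.card S : ℝ) ^ ℓ)]
        simp
      rw [hsum, hcard, ← pow_mul]
  · -- upper bound
    rintro v ⟨p, ⟨h1, h2, h3, -⟩, rfl⟩
    have key : ∀ S : Submodule F (Fin n → F),
        (Fintype.card S : ℝ) ^ ℓ * p S * GG q ℓ k₀ (Module.finrank F S)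
          = (q ^ (k₀ * ℓ) - (Fintype.card S : ℝ) ^ ℓ) * p S := by
      intro S
      by_cases hp : p S = 0
      · rw [hp]; ring
      · have hgood : MinDistGe n d F S := by
          intro w hw hw0
          by_contra hlt
          push_neg at hlt
          exact hp (h2 S ⟨w, hw, hw0, by omega⟩)
        have hkS : Module.finrank F S ≤ k₀ := le_csSup hbdd ⟨S, hgood, rfl⟩
        have hcard : (Fintype.card S : ℝ) = q ^ Module.finrank F S := by
          rw [Module.card_eq_pow_finrank (K := F) (V := S)]
          push_cast
          rfl
        rcases lt_or_eq_of_le hkS with h | h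
        · have e : GG q ℓ k₀ (Module.finrank F S) =
              q ^ ((k₀ - Module.finrank F S) * ℓ) - 1 := if_pos h
          have e2 : Module.finrank F S * ℓ + (k₀ - Module.finrank F S) * ℓ = k₀ * ℓ := by
            rw [← add_mul, Nat.add_sub_cancel' h.le]
          have e3 : q ^ (Module.finrank F S * ℓ) *
              (q ^ ((k₀ - Module.finrank F S) * ℓ) - 1) =
              q ^ (k₀ * ℓ) - q ^ (Module.finrank F S * ℓ) := by
            rw [mul_sub, ← pow_add, e2]; ring
          rw [e, hcard, ← pow_mul]
          linear_combination p S * e3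
        · have e : GG q ℓ k₀ (Module.finrank F S) = 0 := by
            unfold GG; rw [if_neg (by omega)]
          rw [e, hcard, ← pow_mul, h]; ring
    have hswap : ∑ U : Submodule F (Fin n → F), FF n ℓ k₀ F U *
          (∑ S : Submodule F (Fin n → F),
            if S ≤ U then (Fintype.card S : ℝ) ^ ℓ * p S else 0)
        = ∑ S : Submodule F (Fin n → F),
            (Fintype.card S : ℝ) ^ ℓ * p S * GG q ℓ k₀ (Module.finrank F S) := by
      calc ∑ U : Submodule F (Fin n → F), FF n ℓ k₀ F U *
            (∑ S : Submodule F (Fin n → F),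
              if S ≤ U then (Fintype.card S : ℝ) ^ ℓ * p S else 0)
          = ∑ U : Submodule F (Fin n → F), ∑ S : Submodule F (Fin n → F),
              (if S ≤ U then FF n ℓ k₀ F U * ((Fintype.card S : ℝ) ^ ℓ * p S) else 0) := by
            apply Finset.sum_congr rfl
            intro U _
            rw [Finset.mul_sum]
            apply Finset.sum_congr rfl
            intro S _
            rw [mul_ite, mul_zero]
        _ = ∑ S : Submodule F (Fin n → F), ∑ U : Submodule F (Fin n → F),
              (if S ≤ U then FF n ℓ k₀ F U * ((Fintype.card S : ℝ) ^ ℓ * p S) else 0) :=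
            Finset.sum_comm
        _ = ∑ S : Submodule F (Fin n → F),
              GG q ℓ k₀ (Module.finrank F S) * ((Fintype.card S : ℝ) ^ ℓ * p S) := by
            apply Finset.sum_congr rfl
            intro S _
            rw [← Finset.sum_filter, ← Finset.sum_mul, sum_upper]
        _ = ∑ S : Submodule F (Fin n → F),
              (Fintype.card S : ℝ) ^ ℓ * p S * GG q ℓ k₀ (Module.finrank F S) := by
            apply Finset.sum_congr rfl
            intro S _
            ring
    have hpos : 0 ≤ ∑ U : Submodule F (Fin n → F), FF n ℓ k₀ F U *
        (∑ S : Submodule F (Fin n → F),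
          if S ≤ U then (Fintype.card S : ℝ) ^ ℓ * p S else 0) := by
      apply Finset.sum_nonneg
      intro U _
      exact mul_nonneg (FF_nonneg_aux n ℓ k₀ F hnl _ U le_rfl).1 (h3 U)
    rw [hswap, Finset.sum_congr rfl (fun S _ => key S)] at hpos
    have hexp : ∑ S : Submodule F (Fin n → F),
        (q ^ (k₀ * ℓ) - (Fintype.card S : ℝ) ^ ℓ) * p S =
        q ^ (k₀ * ℓ) * (∑ S : Submodule F (Fin n → F), p S) -
          ∑ S : Submodule F (Fin n → F), (Fintype.card S : ℝ) ^ ℓ * p S := by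
      rw [Finset.mul_sum, ← Finset.sum_sub_distrib]
      apply Finset.sum_congr rfl
      intro S _
      ring
    rw [hexp, h1, mul_one] at hpos
    linarith

/-- **Exact completeness of the Krawtchouk hierarchy at level `n`
(Theorem 1.2, pseudoprobability form).** For `ℓ ≥ n`, the value `q^(k₀·ℓ)` is
the greatest element of the set of objective values `∑_S |S|^ℓ p S` over all
`p` feasible for the distance-constrained pseudoprobability program at level `ℓ`. -/
theorem kraw_exact_completeness
    (n ℓ d : ℕ) (hn : 1 ≤ n) (hd : 1 ≤ d) (hdn : d ≤ n) (hnl : n ≤ ℓ)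
    (F : Type) [Field F] [Fintype F] :
    IsGreatest
      {v : ℝ | ∃ p : Submodule F (Fin n → F) → ℝ, PseudoFeasibleDist n ℓ d F p ∧
        v = ∑ S : Submodule F (Fin n → F), (Fintype.card S : ℝ) ^ ℓ * p S}
      ((Fintype.card F : ℝ) ^ (kzero n d F * ℓ)) :=
  kraw_exact_completeness' n ℓ d hn hd hdn hnl F
end
end

section
/- Mass-transfer improvement lemma (key step of Theorem 3.6): assume ℓ ≥ n. Let p be feasible for the dimension-constrained pseudoprobability program at level ℓ, and suppose S_min is a subspace with p(S_min) ≠ 0, dim S_min < k₀, and dim S_min ≤ dim T for every subspace T with p(T) ≠ 0. Then there exists a feasible p₊ with ∑_S |S|^ℓ · p₊(S) > ∑_S |S|^ℓ · p(S); in particular p does not maximize the objective. -/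
open Classical

noncomputable section

set_option maxHeartbeats 1000000
set_option linter.unusedSectionVars false

section Aux
variable {n : ℕ} {F : Type} [Field F] [Fintype F]

lemma sup_span_finrank' (W : Submodule F (Fin n → F)) (x : Fin n → F) (hx : x ∉ W) :
    Module.finrank F ↥(W ⊔ Submodule.span F {x}) = Module.finrank F W + 1 := by
  have hx0 : x ≠ 0 := fun h => hx (h ▸ W.zero_mem)
  have hinf : W ⊓ Submodule.span F {x} = ⊥ := by
    rw [Submodule.eq_bot_iff]
    intro y hy
    obtain ⟨hyW, hys⟩ := Submodule.mem_inf.mp hy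
    obtain ⟨c, rfl⟩ := Submodule.mem_span_singleton.mp hys
    by_contra hy0
    have hc : c ≠ 0 := by rintro rfl; simp at hy0
    exact hx (by simpa [smul_smul, inv_mul_cancel₀ hc] using W.smul_mem c⁻¹ hyW)
  have h := Submodule.finrank_sup_add_finrank_inf_eq W (Submodule.span F {x})
  rw [hinf] at h
  simp [finrank_span_singleton hx0] at h
  omega

lemma exists_between_finrank (W U : Submodule F (Fin n → F)) (hWU : W < U) :
    ∃ T : Submodule F (Fin n → F), W ≤ T ∧ T ≤ U ∧
      Module.finrank F T = Module.finrank F W + 1 := by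
  obtain ⟨x, hxU, hxW⟩ := SetLike.exists_of_lt hWU
  exact ⟨W ⊔ Submodule.span F {x}, le_sup_left,
    sup_le hWU.le (Submodule.span_le.mpr (by simpa using hxU)),
    sup_span_finrank' W x hxW⟩

end Aux

/-- **Mass-transfer improvement lemma (key step of Theorem 3.6).**
For `ℓ ≥ n`, if `p` is feasible for the dimension-constrained pseudoprobability
program and `S_min` is a subspace of minimum dimension in the support of `p`
with `dim S_min < k₀`, then some feasible `p₊` has strictly larger objective
value; in particular `p` is not a maximizer. -/
theorem mass_transfer_improvement
    (n ℓ d : ℕ) (hn : 1 ≤ n) (hd : 1 ≤ d) (hdn : d ≤ n) (hnl : n ≤ ℓ)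
    (F : Type) [Field F] [Fintype F]
    (p : Submodule F (Fin n → F) → ℝ)
    (hfeas : PseudoFeasibleDim n ℓ d F p)
    (Smin : Submodule F (Fin n → F))
    (hne : p Smin ≠ 0)
    (hlt : Module.finrank F Smin < kzero n d F)
    (hmin : ∀ T : Submodule F (Fin n → F), p T ≠ 0 →
      Module.finrank F Smin ≤ Module.finrank F T) :
    ∃ pplus : Submodule F (Fin n → F) → ℝ, PseudoFeasibleDim n ℓ d F pplus ∧
      (∑ S : Submodule F (Fin n → F), (Fintype.card S : ℝ) ^ ℓ * p S)
        < ∑ S : Submodule F (Fin n → F), (Fintype.card S : ℝ) ^ ℓ * pplus S := by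
  obtain ⟨hsum, hdim, hfour, hupper⟩ := hfeas
  set q := Fintype.card F with hq
  have hq1 : 1 < q := Fintype.one_lt_card
  set m := Module.finrank F Smin with hm
  have hcard : ∀ S : Submodule F (Fin n → F),
      Fintype.card S = q ^ Module.finrank F S := fun S => Module.card_eq_pow_finrank
  have hfinrankV : Module.finrank F (Fin n → F) = n := Module.finrank_fin_fun F
  have hk0n : kzero n d F ≤ n := by
    apply csSup_le'
    rintro k ⟨C, -, rfl⟩
    exact le_trans (Submodule.finrank_le C) (le_of_eq hfinrankV)
  have hmn : m < n := lt_of_lt_of_le hlt hk0n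
  have hbelow : ∀ S : Submodule F (Fin n → F), S < Smin → p S = 0 := by
    intro S hS
    by_contra h
    exact absurd (hmin S h) (not_le.mpr (Submodule.finrank_lt_finrank_of_lt hS))
  have hFSmin : (∑ S : Submodule F (Fin n → F),
      if S ≤ Smin then (Fintype.card S : ℝ) ^ ℓ * p S else 0)
      = (Fintype.card Smin : ℝ) ^ ℓ * p Smin := by
    rw [Finset.sum_eq_single Smin]
    · simp
    · intro S _ hSne
      by_cases hSle : S ≤ Smin
      · simp [hSle, hbelow S (lt_of_le_of_ne hSle hSne)]
      · simp [hSle]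
    · simp
  have hcardpos : ∀ S : Submodule F (Fin n → F), (0:ℝ) < (Fintype.card S : ℝ) ^ ℓ := by
    intro S
    have : (0:ℝ) < (Fintype.card S : ℝ) := by exact_mod_cast Fintype.card_pos
    positivity
  have hc : 0 < p Smin := by
    have h4 := hfour Smin
    rw [hFSmin] at h4
    rcases (mul_nonneg_iff_of_pos_left (hcardpos Smin)).mp h4 |>.lt_or_eq with h | h
    · exact h
    · exact absurd h.symm hne
  -- the set of (m+1)-dimensional superspaces of Smin
  set Tset : Finset (Submodule F (Fin n → F)) :=
    Finset.univ.filter (fun T => Smin ≤ T ∧ Module.finrank F T = m + 1) with hTset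
  have hSminTop : Smin < ⊤ := by
    refine lt_of_le_of_ne le_top ?_
    intro h
    have : m = n := by rw [hm, h, finrank_top, hfinrankV]
    omega
  obtain ⟨T0, hT0le, -, hT0rk⟩ := exists_between_finrank Smin ⊤ hSminTop
  have hT0 : T0 ∈ Tset := by simp [hTset, hT0le, hT0rk, hm]
  set K := Tset.card with hK
  have hKpos : 0 < K := Finset.card_pos.mpr ⟨T0, hT0⟩
  have hKR : (0:ℝ) < (K:ℝ) := by exact_mod_cast hKpos
  have hTmem : ∀ T ∈ Tset, Smin ≤ T ∧ Module.finrank F T = m + 1 := by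
    intro T hT
    rw [hTset, Finset.mem_filter] at hT
    exact hT.2
  have hSminLtT : ∀ T ∈ Tset, Smin < T := by
    intro T hT
    refine lt_of_le_of_ne (hTmem T hT).1 ?_
    intro h
    have := (hTmem T hT).2
    rw [← h] at this
    omega
  have hSminNotT : Smin ∉ Tset := by
    intro h
    have := (hTmem Smin h).2
    omega
  -- injective choice of a vector in T \ Smin bounds K
  have hdet : ∀ T ∈ Tset, ∀ x : Fin n → F, x ∈ T → x ∉ Smin →
      T = Smin ⊔ Submodule.span F {x} := by
    intro T hT x hxT hxS
    have hle : Smin ⊔ Submodule.span F {x} ≤ T :=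
      sup_le (hTmem T hT).1 (Submodule.span_le.mpr (by simpa using hxT))
    refine (Submodule.eq_of_le_of_finrank_le hle ?_).symm
    rw [(hTmem T hT).2, sup_span_finrank' Smin x hxS]
  have hKlt : K < q ^ ℓ := by
    set f : Submodule F (Fin n → F) → (Fin n → F) := fun T =>
      if h : Smin < T then (SetLike.exists_of_lt h).choose else 0 with hf
    have hfspec : ∀ T ∈ Tset, f T ∈ T ∧ f T ∉ Smin := by
      intro T hT
      have h := hSminLtT T hT
      rw [hf]
      simp only [dif_pos h]
      obtain ⟨h1, h2⟩ := (SetLike.exists_of_lt h).choose_spec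
      exact ⟨h1, h2⟩
    have h1 : K ≤ (Finset.univ.filter (fun x : Fin n → F => x ∉ Smin)).card := by
      apply Finset.card_le_card_of_injOn f
      · intro T hT
        simp [(hfspec T hT).2]
      · intro T1 h1 T2 h2 hfeq
        rw [hdet T1 h1 (f T1) (hfspec T1 h1).1 (hfspec T1 h1).2,
          hdet T2 h2 (f T2) (hfspec T2 h2).1 (hfspec T2 h2).2, hfeq]
    have h2 : (Finset.univ.filter (fun x : Fin n → F => x ∉ Smin)).card
        < Fintype.card (Fin n → F) := by
      rw [← Finset.card_univ]
      apply Finset.card_lt_card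
      refine ⟨Finset.filter_subset _ _, ?_⟩
      intro hsub
      have h0 := hsub (Finset.mem_univ 0)
      simp at h0
    have h3 : Fintype.card (Fin n → F) = q ^ n := by
      rw [Fintype.card_fun, Fintype.card_fin]
    have h4 : q ^ n ≤ q ^ ℓ := Nat.pow_le_pow_right (le_of_lt hq1) hnl
    omega
  have hKltR : (K:ℝ) < (q:ℝ) ^ ℓ := by exact_mod_cast hKlt
  set c := p Smin with hcdef
  set pplus : Submodule F (Fin n → F) → ℝ := fun S =>
    p S + (if S = Smin then -c else 0) + (if S ∈ Tset then c / K else 0) with hpplus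
  -- the master sum-decomposition identity
  have key : ∀ (cond : Submodule F (Fin n → F) → Prop) (w : Submodule F (Fin n → F) → ℝ),
      (∑ S : Submodule F (Fin n → F), if cond S then w S * pplus S else 0)
        = (∑ S : Submodule F (Fin n → F), if cond S then w S * p S else 0)
          - (if cond Smin then w Smin * c else 0)
          + ∑ T ∈ Tset.filter (fun T => cond T), w T * (c / K) := by
    intro cond w
    have hpt : ∀ S : Submodule F (Fin n → F), (if cond S then w S * pplus S else 0)
        = (if cond S then w S * p S else 0)
          - (if S = Smin then (if cond Smin then w Smin * c else 0) else 0)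
          + (if S ∈ Tset.filter (fun T => cond T) then w S * (c / K) else 0) := by
      intro S
      by_cases hcS : cond S
      · by_cases hSe : S = Smin
        · subst hSe
          simp [hpplus, hcS, hSminNotT]
          ring
        · by_cases hST : S ∈ Tset
          · simp [hpplus, hcS, hSe, hST, Finset.mem_filter]
            ring
          · have : S ∉ Tset.filter (fun T => cond T) := by
              simp [Finset.mem_filter, hST]
            simp [hpplus, hcS, hSe, hST, this]
            try ring
      · have h1 : S ∉ Tset.filter (fun T => cond T) := by
          simp [Finset.mem_filter]
          intro _; exact hcS
        by_cases hSe : S = Smin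
        · subst hSe
          simp [hcS, h1]
        · simp [hcS, hSe, h1]
    rw [Finset.sum_congr rfl (fun S _ => hpt S), Finset.sum_add_distrib,
      Finset.sum_sub_distrib, Finset.sum_ite_eq' Finset.univ Smin, Finset.sum_ite_mem,
      Finset.univ_inter]
    simp
  -- weights
  have hqR : (0:ℝ) < (q:ℝ) := by exact_mod_cast Nat.lt_of_lt_of_le Nat.zero_lt_one hq1.le
  have hwS : (Fintype.card Smin : ℝ) ^ ℓ = ((q:ℝ) ^ m) ^ ℓ := by
    rw [hcard Smin, ← hm]; push_cast; ring
  have hwT : ∀ T ∈ Tset, (Fintype.card T : ℝ) ^ ℓ = ((q:ℝ) ^ (m+1)) ^ ℓ := by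
    intro T hT
    rw [hcard T, (hTmem T hT).2]; push_cast; ring
  have hA : (0:ℝ) < ((q:ℝ) ^ m) ^ ℓ := by positivity
  have he1 : ((q:ℝ) ^ (m+1)) ^ ℓ = ((q:ℝ) ^ m) ^ ℓ * (q:ℝ) ^ ℓ := by
    rw [← pow_mul, ← pow_mul, ← pow_add]
    congr 1
    ring
  have hkey_lt : ((q:ℝ) ^ m) ^ ℓ * c < ((q:ℝ) ^ (m+1)) ^ ℓ * (c / K) := by
    rw [he1]
    have h1 : c < (q:ℝ) ^ ℓ * (c / K) := by
      rw [mul_div_assoc', lt_div_iff₀ hKR]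
      nlinarith [hc, hKltR]
    calc ((q:ℝ) ^ m) ^ ℓ * c < ((q:ℝ) ^ m) ^ ℓ * ((q:ℝ) ^ ℓ * (c / K)) :=
          (mul_lt_mul_iff_right₀ hA).mpr h1
      _ = ((q:ℝ) ^ m) ^ ℓ * (q:ℝ) ^ ℓ * (c / K) := by ring
  have hcK : (0:ℝ) ≤ c / K := le_of_lt (div_pos hc hKR)
  have hKcancel : (K:ℝ) * (c / K) = c := by
    rw [mul_comm, div_mul_cancel₀ c (ne_of_gt hKR)]
  -- (a) normalization
  have ha : (∑ S : Submodule F (Fin n → F), pplus S) = 1 := by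
    have h := key (fun _ => True) (fun _ => (1:ℝ))
    simp only [if_true, one_mul, Finset.filter_true] at h
    rw [h, hsum, Finset.sum_const, nsmul_eq_mul, hKcancel]
    ring
  -- (b) dimension constraint
  have hb : ∀ S : Submodule F (Fin n → F), kzero n d F < Module.finrank F S → pplus S = 0 := by
    intro S hS
    have h0 := hdim S hS
    have h1 : S ≠ Smin := by
      intro h; rw [h, ← hm] at hS; omega
    have h2 : S ∉ Tset := by
      intro h
      rw [(hTmem S h).2] at hS
      omega
    simp [hpplus, h0, h1, h2]
  -- (c) Fourier constraints
  have hcF : ∀ U : Submodule F (Fin n → F),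
      0 ≤ ∑ S : Submodule F (Fin n → F),
        if S ≤ U then (Fintype.card S : ℝ) ^ ℓ * pplus S else 0 := by
    intro U
    rw [key (fun S => S ≤ U) (fun S => (Fintype.card S : ℝ) ^ ℓ)]
    by_cases hU : Smin ≤ U
    · by_cases hUe : U = Smin
      · subst hUe
        have hfe : Tset.filter (fun T => T ≤ U) = ∅ := by
          rw [Finset.filter_eq_empty_iff]
          intro T hT hTU
          have := Submodule.finrank_lt_finrank_of_lt (lt_of_le_of_ne hTU (fun h => hSminNotT (h ▸ hT)))
          rw [(hTmem T hT).2, ← hm] at this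
          omega
        rw [hfe]
        simp only [hU, if_true, Finset.sum_empty, add_zero]
        rw [hFSmin]
        linarith
      · have hUlt : Smin < U := lt_of_le_of_ne hU (Ne.symm hUe)
        obtain ⟨T1, h1, h2, h3⟩ := exists_between_finrank Smin U hUlt
        have hT1T : T1 ∈ Tset := by
          rw [hTset, Finset.mem_filter]
          refine ⟨Finset.mem_univ _, h1, ?_⟩
          rw [h3, hm]
        have hT1 : T1 ∈ Tset.filter (fun T => T ≤ U) :=
          Finset.mem_filter.mpr ⟨hT1T, h2⟩
        have hsumge : (Fintype.card T1 : ℝ) ^ ℓ * (c / K)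
            ≤ ∑ T ∈ Tset.filter (fun T => T ≤ U), (Fintype.card T : ℝ) ^ ℓ * (c / K) := by
          apply Finset.single_le_sum _ hT1
          intro T hT
          exact mul_nonneg (le_of_lt (hcardpos T)) hcK
        rw [hwT T1 hT1T] at hsumge
        have hold := hfour U
        simp only [hU, if_true]
        rw [hwS]
        linarith [hkey_lt]
    · have hfe : Tset.filter (fun T => T ≤ U) = ∅ := by
        rw [Finset.filter_eq_empty_iff]
        intro T hT hTU
        exact hU (le_trans (hTmem T hT).1 hTU)
      rw [hfe]
      simp only [hU, if_false, Finset.sum_empty, add_zero, sub_zero]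
      exact hfour U
  -- (d) nonnegativity constraints
  have hdU : ∀ U : Submodule F (Fin n → F),
      0 ≤ ∑ S : Submodule F (Fin n → F), if U ≤ S then pplus S else 0 := by
    intro U
    have hrw : (∑ S : Submodule F (Fin n → F), if U ≤ S then pplus S else 0)
        = ∑ S : Submodule F (Fin n → F), if U ≤ S then (1:ℝ) * pplus S else 0 :=
      Finset.sum_congr rfl (fun S _ => by rw [one_mul])
    rw [hrw, key (fun S => U ≤ S) (fun _ => (1:ℝ))]
    have hold := hupper U
    have hrw2 : (∑ S : Submodule F (Fin n → F), if U ≤ S then (1:ℝ) * p S else 0)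
        = ∑ S : Submodule F (Fin n → F), if U ≤ S then p S else 0 :=
      Finset.sum_congr rfl (fun S _ => by rw [one_mul])
    rw [hrw2]
    by_cases hU : U ≤ Smin
    · have hfs : Tset.filter (fun T => U ≤ T) = Tset := by
        rw [Finset.filter_eq_self]
        intro T hT
        exact le_trans hU (hTmem T hT).1
      rw [hfs]
      simp only [hU, if_true, one_mul]
      rw [Finset.sum_const, nsmul_eq_mul, hKcancel]
      linarith
    · simp only [hU, if_false, sub_zero, one_mul]
      have h9 : 0 ≤ ∑ T ∈ Tset.filter (fun T => U ≤ T), c / K :=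
        Finset.sum_nonneg (fun T _ => hcK)
      clear hU
      linarith
  -- objective strictly improves
  have hobj : (∑ S : Submodule F (Fin n → F), (Fintype.card S : ℝ) ^ ℓ * p S)
      < ∑ S : Submodule F (Fin n → F), (Fintype.card S : ℝ) ^ ℓ * pplus S := by
    have h := key (fun _ => True) (fun S => (Fintype.card S : ℝ) ^ ℓ)
    simp only [if_true, Finset.filter_true] at h
    rw [h]
    have hTsum : (∑ T ∈ Tset, (Fintype.card T : ℝ) ^ ℓ * (c / K))
        = (K:ℝ) * (((q:ℝ) ^ (m+1)) ^ ℓ * (c / K)) := by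
      rw [Finset.sum_congr rfl (fun T hT => by rw [hwT T hT]), Finset.sum_const, nsmul_eq_mul]
    rw [hTsum, hwS]
    have hKc : (K:ℝ) * (((q:ℝ) ^ (m+1)) ^ ℓ * (c / K)) = ((q:ℝ) ^ (m+1)) ^ ℓ * c := by
      rw [mul_left_comm, hKcancel]
    rw [hKc, he1]
    have hql : (1:ℝ) < (q:ℝ) ^ ℓ := by
      apply one_lt_pow₀
      · exact_mod_cast hq1
      · omega
    nlinarith [mul_pos hA hc, hql]
  exact ⟨pplus, ⟨ha, hb, hcF, hdU⟩, hobj⟩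
end
end

section
/- Positivity at minimal support dimension: let p be a function from the subspaces of F^n to ℝ satisfying the Fourier constraints at level ℓ, i.e., ∑_{S : S ≤ U} |S|^ℓ · p(S) ≥ 0 for every subspace U of F^n. If S₀ is a subspace with p(S₀) ≠ 0 such that dim S₀ ≤ dim T for every subspace T with p(T) ≠ 0, then p(S₀) > 0. -/
open Classical

/-- **Positivity at minimal support dimension.** If `p` satisfies the Fourier
constraints at level `ℓ` (i.e. `∑_{S ≤ U} |S|^ℓ p S ≥ 0` for every subspace `U`)
and `S₀` is a subspace of minimal dimension among those with `p ≠ 0`, then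
`p S₀ > 0`. -/
theorem positivity_at_minimal_support_dimension
    (n ℓ : ℕ) (hn : 1 ≤ n) (F : Type) [Field F] [Fintype F]
    (p : Submodule F (Fin n → F) → ℝ)
    (hFourier : ∀ U : Submodule F (Fin n → F),
      0 ≤ ∑ S : Submodule F (Fin n → F),
        if S ≤ U then (Fintype.card S : ℝ) ^ ℓ * p S else 0)
    (S₀ : Submodule F (Fin n → F)) (hS₀ : p S₀ ≠ 0)
    (hmin : ∀ T : Submodule F (Fin n → F), p T ≠ 0 →
      Module.finrank F S₀ ≤ Module.finrank F T) :
    0 < p S₀ := by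
  have h := hFourier S₀
  have hsum : (∑ S : Submodule F (Fin n → F),
      if S ≤ S₀ then (Fintype.card S : ℝ) ^ ℓ * p S else 0)
      = (Fintype.card S₀ : ℝ) ^ ℓ * p S₀ := by
    rw [Finset.sum_eq_single S₀]
    · simp
    · intro S _ hne
      by_cases hle : S ≤ S₀
      · simp only [hle, if_true]
        have hp : p S = 0 := by
          by_contra hp
          exact hne (Submodule.eq_of_le_of_finrank_le hle (hmin S hp))
        simp [hp]
      · simp [hle]
    · intro hmem; exact absurd (Finset.mem_univ S₀) hmem
  rw [hsum] at h
  have hcard : (0:ℝ) < (Fintype.card S₀ : ℝ) ^ ℓ := by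
    positivity
  have := nonneg_of_mul_nonneg_right h hcard
  rcases lt_or_eq_of_le this with h' | h'
  · exact h'
  · exact absurd h'.symm hS₀
end

section
/- Equivalence for the full Krawtchouk LP with partial objective (Lemma 4.1): assume ℓ ≥ n. Let p be a function from the subspaces of F^n to ℝ and define a : (F^n)^ℓ → ℝ by a(x) := ∑_{T : Span(x) ≤ T} p(T). Then a is feasible for the unsymmetrized Krawtchouk LP at level ℓ if and only if p is feasible for the distance-constrained pseudoprobability program at level ℓ; moreover the partial objective satisfies ∑_{x₁ ∈ F^n} a(x₁, 0, …, 0) = ∑_S |S| · p(S). -/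
open Classical

noncomputable section

def dotB (n : ℕ) (F : Type) [Field F] : LinearMap.BilinForm F (Fin n → F) :=
  LinearMap.mk₂ F (fun u v => ∑ i, u i * v i)
    (fun u u' v => by simp [add_mul, Finset.sum_add_distrib])
    (fun c u v => by simp [Finset.mul_sum, mul_assoc])
    (fun u v v' => by simp [mul_add, Finset.sum_add_distrib])
    (fun c u v => by simp [Finset.mul_sum, mul_left_comm])

lemma dotB_apply {n : ℕ} {F : Type} [Field F] (u v : Fin n → F) :
    dotB n F u v = ∑ i, u i * v i := rfl

lemma dotB_refl (n : ℕ) (F : Type) [Field F] : (dotB n F).IsRefl := by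
  intro u v h
  rw [dotB_apply] at h ⊢
  rw [← h]
  exact Finset.sum_congr rfl fun i _ => mul_comm _ _

lemma dotB_nondeg (n : ℕ) (F : Type) [Field F] : (dotB n F).Nondegenerate := by
  refine ⟨?_, ?_⟩ <;>
  · intro u hu
    funext i
    have := hu (Pi.single i 1)
    rw [dotB_apply] at this
    simpa [Pi.single_apply] using this

lemma cond_iff {n ℓ : ℕ} {F : Type} [Field F] [Fintype F]
    (T : Submodule F (Fin n → F)) (α : Fin ℓ → Fin n → F) :
    (∀ j, ∀ v ∈ T, (∑ i, α j i * v i) = 0)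
      ↔ T ≤ (dotB n F).orthogonal (Submodule.span F (Set.range α)) := by
  constructor
  · intro h v hv
    rw [LinearMap.BilinForm.mem_orthogonal_iff]
    intro u hu
    have hsub : Set.range α ⊆ (LinearMap.ker ((dotB n F).flip v) : Set (Fin n → F)) := by
      rintro _ ⟨j, rfl⟩
      show (dotB n F).flip v (α j) = 0
      show dotB n F (α j) v = 0
      rw [dotB_apply]
      exact h j v hv
    have := Submodule.span_le.2 hsub hu
    show dotB n F u v = 0
    simpa using this
  · intro h j v hv
    have h2 := h hv
    rw [LinearMap.BilinForm.mem_orthogonal_iff] at h2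
    have := h2 (α j) (Submodule.subset_span ⟨j, rfl⟩)
    rw [dotB_apply] at this
    exact this

lemma addchar_map_sum {A : Type*} [AddCommMonoid A] (ψ : AddChar A ℂ)
    {ι : Type*} (s : Finset ι) (f : ι → A) :
    ψ (∑ j ∈ s, f j) = ∏ j ∈ s, ψ (f j) := by
  induction s using Finset.cons_induction with
  | empty => simp
  | cons j s hj IH => rw [Finset.sum_cons, Finset.prod_cons, AddChar.map_add_eq_mul, IH]

lemma char_sum {n : ℕ} {F : Type} [Field F] [Fintype F]
    (ψ : AddChar F ℂ) (hψ : ψ ≠ 1) (T : Submodule F (Fin n → F)) (α₀ : Fin n → F) :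
    (∑ v : T, ψ (∑ i, α₀ i * (v : Fin n → F) i))
      = if ∀ v ∈ T, (∑ i, α₀ i * v i) = 0 then (Fintype.card T : ℂ) else 0 := by
  split
  · next hcond =>
    rw [Finset.sum_congr rfl fun v _ => by rw [hcond v v.2, AddChar.map_zero_eq_one]]
    simp [Finset.card_univ]
  · next hcond =>
    push_neg at hcond
    obtain ⟨v₀, hv₀T, hb⟩ := hcond
    set χ : AddChar T ℂ :=
      { toFun := fun v => ψ (∑ i, α₀ i * (v : Fin n → F) i)
        map_zero_eq_one' := by simp
        map_add_eq_mul' := by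
          intro u v
          show ψ _ = ψ _ * ψ _
          rw [← AddChar.map_add_eq_mul]
          congr 1
          rw [← Finset.sum_add_distrib]
          refine Finset.sum_congr rfl fun i _ => ?_
          show α₀ i * ((u : Fin n → F) i + (v : Fin n → F) i) = _
          ring } with hχ
    have hne : χ ≠ 1 := by
      rw [AddChar.ne_one_iff]
      obtain ⟨c, hc⟩ := AddChar.ne_one_iff.1 hψ
      set b := ∑ i, α₀ i * v₀ i with hbdef
      refine ⟨⟨(c * b⁻¹) • v₀, T.smul_mem _ hv₀T⟩, ?_⟩
      show ψ (∑ i, α₀ i * ((c * b⁻¹) • v₀) i) ≠ 1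
      have : (∑ i, α₀ i * ((c * b⁻¹) • v₀) i) = c := by
        rw [Finset.sum_congr rfl fun i _ => by
          show α₀ i * (c * b⁻¹ * v₀ i) = (c * b⁻¹) * (α₀ i * v₀ i); ring]
        rw [← Finset.mul_sum, ← hbdef, mul_assoc, inv_mul_cancel₀ hb, mul_one]
      rw [this]; exact hc
    have hzero : χ ≠ 0 := by
      intro h
      exact hne (h.trans rfl)
    have := AddChar.sum_eq_zero_iff_ne_zero.2 hzero
    exact this

set_option maxHeartbeats 1000000 in
lemma fourier_eq {n ℓ : ℕ} {F : Type} [Field F] [Fintype F]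
    (ψ : AddChar F ℂ) (hψ : ψ ≠ 1) (p : Submodule F (Fin n → F) → ℝ)
    (α : Fin ℓ → Fin n → F) :
    (∑ x : Fin ℓ → Fin n → F,
        ((∑ T : Submodule F (Fin n → F),
            if Submodule.span F (Set.range x) ≤ T then p T else 0 : ℝ) : ℂ) * chi ψ α x)
      = ((∑ T : Submodule F (Fin n → F),
            if T ≤ (dotB n F).orthogonal (Submodule.span F (Set.range α))
            then (Fintype.card T : ℝ) ^ ℓ * p T else 0 : ℝ) : ℂ) := by
  set W := (dotB n F).orthogonal (Submodule.span F (Set.range α)) with hW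
  have step1 : (∑ x : Fin ℓ → Fin n → F,
        ((∑ T : Submodule F (Fin n → F),
            if Submodule.span F (Set.range x) ≤ T then p T else 0 : ℝ) : ℂ) * chi ψ α x)
      = ∑ T : Submodule F (Fin n → F), (p T : ℂ) *
          ∑ x : Fin ℓ → Fin n → F, (if (∀ j, x j ∈ T) then chi ψ α x else 0) := by
    have h1 : ∀ x : Fin ℓ → Fin n → F,
        ((∑ T : Submodule F (Fin n → F),
            if Submodule.span F (Set.range x) ≤ T then p T else 0 : ℝ) : ℂ) * chi ψ α x
        = ∑ T : Submodule F (Fin n → F),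
            (p T : ℂ) * (if (∀ j, x j ∈ T) then chi ψ α x else 0) := by
      intro x
      push_cast
      rw [Finset.sum_mul]
      refine Finset.sum_congr rfl fun T _ => ?_
      have hc : Submodule.span F (Set.range x) ≤ T ↔ ∀ j, x j ∈ T := by
        rw [Submodule.span_le, Set.range_subset_iff]
        rfl
      by_cases h : ∀ j, x j ∈ T
      · rw [if_pos (hc.2 h), if_pos h]
      · rw [if_neg (fun hh => h (hc.1 hh)), if_neg h, mul_zero, Complex.ofReal_zero, zero_mul]
    rw [Finset.sum_congr rfl fun x _ => h1 x, Finset.sum_comm]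
    exact Finset.sum_congr rfl fun T _ => (Finset.mul_sum _ _ _).symm
  have hinner : ∀ T : Submodule F (Fin n → F),
      (∑ x : Fin ℓ → Fin n → F, (if (∀ j, x j ∈ T) then chi ψ α x else 0))
        = if T ≤ W then ((Fintype.card T : ℂ)) ^ ℓ else 0 := by
    intro T
    calc (∑ x : Fin ℓ → Fin n → F, (if (∀ j, x j ∈ T) then chi ψ α x else 0))
        = ∑ x ∈ Finset.univ.filter (fun x : Fin ℓ → Fin n → F => ∀ j, x j ∈ T),
            chi ψ α x := (Finset.sum_filter _ _).symm
      _ = ∑ s : {x : Fin ℓ → Fin n → F // ∀ j, x j ∈ T}, chi ψ α (s : Fin ℓ → Fin n → F) := by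
            rw [Finset.sum_subtype]
            intro x; simp
      _ = ∑ g : Fin ℓ → T, chi ψ α (fun j => (g j : Fin n → F)) :=
            Fintype.sum_equiv (Equiv.subtypePiEquivPi) _ _ (fun s => by rfl)
      _ = ∑ g : Fin ℓ → T, ∏ j, ψ (∑ i, α j i * (g j : Fin n → F) i) := by
            refine Finset.sum_congr rfl fun g _ => ?_
            rw [chi, addchar_map_sum]
      _ = ∏ j, ∑ v : T, ψ (∑ i, α j i * (v : Fin n → F) i) :=
            (Fintype.prod_sum (κ := fun _ : Fin ℓ => T) (fun j v => ψ (∑ i, α j i * (v : Fin n → F) i))).symm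
      _ = ∏ j, (if ∀ v ∈ T, (∑ i, α j i * v i) = 0 then (Fintype.card T : ℂ) else 0) :=
            Finset.prod_congr rfl fun j _ => char_sum ψ hψ T (α j)
      _ = if T ≤ W then ((Fintype.card T : ℂ)) ^ ℓ else 0 := by
            by_cases h : ∀ j, ∀ v ∈ T, (∑ i, α j i * v i) = 0
            · rw [if_pos ((cond_iff T α).1 h)]
              rw [Finset.prod_congr rfl fun j _ => if_pos (h j)]
              simp [Finset.card_univ]
            · rw [if_neg (fun hh => h ((cond_iff T α).2 hh))]
              obtain ⟨j, hj⟩ := not_forall.1 h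
              exact Finset.prod_eq_zero (Finset.mem_univ j) (if_neg hj)
  rw [step1, Finset.sum_congr rfl fun T _ => by rw [hinner T]]
  push_cast
  refine Finset.sum_congr rfl fun T _ => ?_
  by_cases h : T ≤ W
  · rw [if_pos h, if_pos h]; push_cast; ring
  · rw [if_neg h, if_neg h, mul_zero, Complex.ofReal_zero]

lemma span_exists {n ℓ : ℕ} {F : Type} [Field F] (hnl : n ≤ ℓ)
    (U : Submodule F (Fin n → F)) :
    ∃ x : Fin ℓ → Fin n → F, Submodule.span F (Set.range x) = U := by
  set m := Module.finrank F U with hm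
  have hmn : m ≤ n := by
    have h1 : Module.finrank F (Fin n → F) = n := Module.finrank_fin_fun F
    have := Submodule.finrank_le U
    omega
  have hml : m ≤ ℓ := hmn.trans hnl
  let b : Module.Basis (Fin m) F U := Module.finBasis F U
  refine ⟨fun j => if h : (j : ℕ) < m then (b ⟨j, h⟩ : Fin n → F) else 0, ?_⟩
  apply le_antisymm
  · rw [Submodule.span_le]
    rintro _ ⟨j, rfl⟩
    by_cases h : (j : ℕ) < m
    · simp only [h, dif_pos]
      exact (b ⟨j, h⟩).2
    · simp only [h, dif_neg, not_false_iff]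
      exact U.zero_mem
  · have h1 : Submodule.span F (U.subtype '' Set.range b) = U := by
      rw [Submodule.span_image, b.span_eq, Submodule.map_top, Submodule.range_subtype]
    conv_lhs => rw [← h1]
    rw [Submodule.span_le]
    rintro _ ⟨_, ⟨i, rfl⟩, rfl⟩
    apply Submodule.subset_span
    refine ⟨⟨(i : ℕ), lt_of_lt_of_le i.2 hml⟩, ?_⟩
    have h : ((⟨(i : ℕ), lt_of_lt_of_le i.2 hml⟩ : Fin ℓ) : ℕ) < m := i.2
    simp only [h, dif_pos]
    congr

lemma mobius_zero {n : ℕ} {F : Type} [Field F] [Fintype F]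
    (p : Submodule F (Fin n → F) → ℝ) (S : Submodule F (Fin n → F))
    (h : ∀ T, S ≤ T → (∑ T' : Submodule F (Fin n → F), if T ≤ T' then p T' else 0) = 0) :
    p S = 0 := by
  have key : ∀ T : Submodule F (Fin n → F), S ≤ T → p T = 0 := by
    have : Finite (Submodule F (Fin n → F)) := Finite.of_fintype _
    intro T
    induction T using (IsWellFounded.induction (α := Submodule F (Fin n → F)) (· > ·)) with
    | _ T IH =>
      intro hST
      have hsplit : (∑ T' : Submodule F (Fin n → F), if T ≤ T' then p T' else 0)
          = p T + ∑ T' : Submodule F (Fin n → F), if T < T' then p T' else 0 := by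
        have hterm : ∀ T' : Submodule F (Fin n → F),
            (if T ≤ T' then p T' else 0)
              = (if T' = T then p T' else 0) + (if T < T' then p T' else 0) := by
          intro T'
          rcases eq_or_ne T' T with rfl | hne
          · simp [lt_irrefl]
          · by_cases hle : T ≤ T'
            · have hlt : T < T' := lt_of_le_of_ne hle (Ne.symm hne)
              simp [hle, hne, hlt]
            · have hnlt : ¬ T < T' := fun hh => hle hh.le
              simp [hle, hne, hnlt]
        rw [Finset.sum_congr rfl fun T' _ => hterm T', Finset.sum_add_distrib,
          Finset.sum_ite_eq' Finset.univ T p]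
        simp
      have hz : (∑ T' : Submodule F (Fin n → F), if T < T' then p T' else 0) = 0 := by
        apply Finset.sum_eq_zero
        intro T' _
        split
        · next hlt => exact IH T' hlt (hST.trans hlt.le)
        · rfl
      have := h T hST
      rw [hsplit, hz, add_zero] at this
      exact this
  exact key S le_rfl

/-- **Equivalence for the full Krawtchouk LP with partial objective (Lemma 4.1).**
For `ℓ ≥ n`, with `a x := ∑_{T ≥ Span x} p T`, `a` is feasible for the
unsymmetrized Krawtchouk LP iff `p` is feasible for the distance-constrained
pseudoprobability program, and the partial objective satisfies
`∑_{x₁ ∈ F^n} a (x₁, 0, …, 0) = ∑_S |S| p S`. -/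
theorem full_kraw_partial_objective_equivalence
    (n ℓ d : ℕ) (hn : 1 ≤ n) (hd : 1 ≤ d) (hdn : d ≤ n) (hnl : n ≤ ℓ)
    (F : Type) [Field F] [Fintype F]
    (ψ : AddChar F ℂ) (hψ : ψ ≠ 1)
    (p : Submodule F (Fin n → F) → ℝ)
    (a : (Fin ℓ → Fin n → F) → ℝ)
    (ha : ∀ x : Fin ℓ → Fin n → F,
      a x = ∑ T : Submodule F (Fin n → F),
        if Submodule.span F (Set.range x) ≤ T then p T else 0) :
    (KrawFeasible n ℓ d F ψ a ↔ PseudoFeasibleDist n ℓ d F p) ∧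
    (∑ x₁ : Fin n → F, a (fun j : Fin ℓ => if j.val = 0 then x₁ else 0))
      = ∑ S : Submodule F (Fin n → F), (Fintype.card S : ℝ) * p S := by
  have hl0 : 0 < ℓ := lt_of_lt_of_le hn hnl
  -- a at 0
  have hspan0 : Submodule.span F (Set.range (0 : Fin ℓ → Fin n → F)) = ⊥ := by
    have h0 : Set.range (0 : Fin ℓ → Fin n → F) = {0} := by
      have : Nonempty (Fin ℓ) := ⟨⟨0, hl0⟩⟩
      exact Set.range_const
    rw [h0]
    exact Submodule.span_zero_singleton F
  have ha0 : a 0 = ∑ T : Submodule F (Fin n → F), p T := by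
    rw [ha, hspan0]
    exact Finset.sum_congr rfl fun T _ => if_pos bot_le
  have hWex : ∀ U : Submodule F (Fin n → F), ∃ α : Fin ℓ → Fin n → F,
      (dotB n F).orthogonal (Submodule.span F (Set.range α)) = U := by
    intro U
    obtain ⟨α, hα⟩ := span_exists hnl ((dotB n F).orthogonal U)
    refine ⟨α, ?_⟩
    rw [hα, LinearMap.BilinForm.orthogonal_orthogonal (dotB_nondeg n F) (dotB_refl n F)]
  constructor
  · constructor
    · rintro ⟨h1, h2, h3, h4⟩
      refine ⟨by rw [← ha0]; exact h1, ?_, ?_, ?_⟩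
      · rintro S ⟨w, hwS, hw0, hwd⟩
        apply mobius_zero p S
        intro T hST
        obtain ⟨x, hx⟩ := span_exists hnl T
        have h := h2 x ⟨w, by rw [hx]; exact hST hwS, hw0, hwd⟩
        rw [ha, hx] at h
        exact h
      · intro U
        obtain ⟨α, hαU⟩ := hWex U
        obtain ⟨c, hc0, hc⟩ := h3 α
        have heq := fourier_eq ψ hψ p α
        rw [hαU] at heq
        simp only [ha] at hc
        rw [hc] at heq
        rw [← Complex.ofReal_inj.1 heq]
        exact hc0
      · intro U
        obtain ⟨x, hx⟩ := span_exists hnl U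
        have h := h4 x
        rw [ha, hx] at h
        exact h
    · rintro ⟨h1, h2, h3, h4⟩
      refine ⟨ha0.trans h1, ?_, ?_, ?_⟩
      · rintro x ⟨w, hws, hw0, hwd⟩
        rw [ha]
        apply Finset.sum_eq_zero
        intro T _
        split
        · next hle => exact h2 T ⟨w, hle hws, hw0, hwd⟩
        · rfl
      · intro α
        refine ⟨∑ T : Submodule F (Fin n → F),
          if T ≤ (dotB n F).orthogonal (Submodule.span F (Set.range α))
          then (Fintype.card T : ℝ) ^ ℓ * p T else 0, h3 _, ?_⟩
        simp only [ha]
        exact fourier_eq ψ hψ p α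
      · intro x
        rw [ha]
        exact h4 _
  · -- objective
    have hsp : ∀ x₁ : Fin n → F,
        Submodule.span F (Set.range (fun j : Fin ℓ => if (j : ℕ) = 0 then x₁ else 0))
          = Submodule.span F {x₁} := by
      intro x₁
      apply le_antisymm
      · rw [Submodule.span_le]
        rintro _ ⟨j, rfl⟩
        dsimp only
        split
        · exact Submodule.subset_span rfl
        · exact Submodule.zero_mem _
      · rw [Submodule.span_le, Set.singleton_subset_iff]
        apply Submodule.subset_span
        exact ⟨⟨0, hl0⟩, by simp⟩
    calc (∑ x₁ : Fin n → F, a (fun j : Fin ℓ => if j.val = 0 then x₁ else 0))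
        = ∑ x₁ : Fin n → F, ∑ T : Submodule F (Fin n → F), if x₁ ∈ T then p T else 0 := by
          refine Finset.sum_congr rfl fun x₁ _ => ?_
          rw [ha]
          refine Finset.sum_congr rfl fun T _ => ?_
          rw [hsp x₁, Submodule.span_singleton_le_iff_mem]
      _ = ∑ T : Submodule F (Fin n → F), ∑ x₁ : Fin n → F, if x₁ ∈ T then p T else 0 :=
          Finset.sum_comm
      _ = ∑ S : Submodule F (Fin n → F), (Fintype.card S : ℝ) * p S := by
          refine Finset.sum_congr rfl fun T _ => ?_
          rw [← Finset.sum_filter, Finset.sum_const, nsmul_eq_mul]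
          congr 1
          rw [Fintype.card_subtype]
end
end

section
/- Structure of optima for the partial Krawtchouk objective (Theorem 4.4, structure of optima): assume ℓ ≥ n. If p is feasible for the dimension-constrained pseudoprobability program at level ℓ and maximizes the objective ∑_S |S| · p(S) among all feasible solutions, then p(S) ≥ 0 for every subspace S, ∑_S p(S) = 1, and p(S) = 0 for every subspace S with dim S ≠ k₀. -/
open Classical

noncomputable section

def hval (q k₀ ℓ m : ℕ) : ℝ :=
  if m ≤ k₀ then ((q : ℝ) ^ k₀ - (q : ℝ) ^ m) / (q : ℝ) ^ (m * ℓ) else 0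

lemma hval_nonneg {q k₀ ℓ m : ℕ} (hq : 1 ≤ q) : 0 ≤ hval q k₀ ℓ m := by
  unfold hval
  split
  · apply div_nonneg
    · have h1 : (1:ℝ) ≤ (q:ℝ) := by exact_mod_cast hq
      have : (q:ℝ) ^ m ≤ (q:ℝ) ^ k₀ := pow_le_pow_right₀ h1 (by assumption)
      linarith
    · positivity
  · exact le_refl _

lemma hval_def (q k₀ ℓ m : ℕ) (h : m ≤ k₀) :
    hval q k₀ ℓ m = ((q : ℝ) ^ k₀ - (q : ℝ) ^ m) / (q : ℝ) ^ (m * ℓ) := by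
  unfold hval
  rw [if_pos h]


lemma hval_eq_zero {q k₀ ℓ m : ℕ} (h : k₀ ≤ m) : hval q k₀ ℓ m = 0 := by
  unfold hval
  split
  · have : m = k₀ := le_antisymm (by assumption) h
    simp [this]
  · rfl

lemma hval_key (q k₀ ℓ n m : ℕ) (hq : 2 ≤ q) (hm : m < k₀) (hk0n : k₀ ≤ n) (hnl : n ≤ ℓ)
    (c : ℝ) (hc0 : 0 ≤ c) (hc : c ≤ (q:ℝ)^n - (q:ℝ)^m) :
    c * hval q k₀ ℓ (m+1) < hval q k₀ ℓ m := by
  have hx2 : (2:ℝ) ≤ (q:ℝ) := by exact_mod_cast hq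
  have hx1 : (1:ℝ) < (q:ℝ) := by linarith
  have hx0 : (0:ℝ) < (q:ℝ) := by linarith
  rw [hval, hval, if_pos hm.le, if_pos (Nat.succ_le_of_lt hm)]
  have hT : c * ((q:ℝ)^k₀ - (q:ℝ)^(m+1)) < ((q:ℝ)^k₀ - (q:ℝ)^m) * (q:ℝ)^ℓ := by
    rcases eq_or_lt_of_le (Nat.succ_le_of_lt hm) with he | hlt
    · have he' : k₀ = m+1 := by omega
      rw [he']
      have h1 : (q:ℝ)^m < (q:ℝ)^(m+1) := pow_lt_pow_right₀ hx1 (Nat.lt_succ_self m)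
      have h2 : (0:ℝ) < (q:ℝ)^ℓ := pow_pos hx0 ℓ
      nlinarith
    · have hfac : (0:ℝ) < (q:ℝ)^k₀ - (q:ℝ)^(m+1) :=
        sub_pos.mpr (pow_lt_pow_right₀ hx1 hlt)
      have h1 : c * ((q:ℝ)^k₀ - (q:ℝ)^(m+1))
          ≤ ((q:ℝ)^ℓ - (q:ℝ)^m) * ((q:ℝ)^k₀ - (q:ℝ)^(m+1)) := by
        have hnℓ : (q:ℝ)^n ≤ (q:ℝ)^ℓ := pow_le_pow_right₀ hx1.le hnl
        apply mul_le_mul_of_nonneg_right _ hfac.le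
        linarith
      have h2 : ((q:ℝ)^ℓ - (q:ℝ)^m) * ((q:ℝ)^k₀ - (q:ℝ)^(m+1))
          < ((q:ℝ)^k₀ - (q:ℝ)^m) * (q:ℝ)^ℓ := by
        have e1 : (q:ℝ)^ℓ * (q:ℝ)^m * 2 ≤ (q:ℝ)^ℓ * (q:ℝ)^(m+1) := by
          have hmm : (q:ℝ)^(m+1) = (q:ℝ)^m * (q:ℝ) := by ring
          rw [hmm]
          have hp : (0:ℝ) < (q:ℝ)^ℓ * (q:ℝ)^m := by positivity
          nlinarith
        have e2 : (q:ℝ)^m * (q:ℝ)^(m+1) ≤ (q:ℝ)^m * (q:ℝ)^k₀ := by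
          apply mul_le_mul_of_nonneg_left (pow_le_pow_right₀ hx1.le hlt.le) (by positivity)
        have hp2 : (0:ℝ) < (q:ℝ)^ℓ * (q:ℝ)^m := by positivity
        nlinarith
      linarith
  have hd1 : (0:ℝ) < (q:ℝ)^(m*ℓ) := pow_pos hx0 _
  have hd2 : (0:ℝ) < (q:ℝ)^((m+1)*ℓ) := pow_pos hx0 _
  rw [mul_div_assoc', div_lt_div_iff₀ hd2 hd1]
  have hexp : (m+1)*ℓ = m*ℓ + ℓ := by ring
  rw [hexp]
  calc c * ((q:ℝ)^k₀ - (q:ℝ)^(m+1)) * (q:ℝ)^(m*ℓ)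
      < ((q:ℝ)^k₀ - (q:ℝ)^m) * (q:ℝ)^ℓ * (q:ℝ)^(m*ℓ) := mul_lt_mul_of_pos_right hT hd1
    _ = ((q:ℝ)^k₀ - (q:ℝ)^m) * (q:ℝ)^(m*ℓ+ℓ) := by rw [pow_add]; ring

variable (n ℓ k₀ d : ℕ) (F : Type) [Field F] [Fintype F]

lemma frk_le (U : Submodule F (Fin n → F)) : Module.finrank F U ≤ n := by
  simpa [Module.finrank_fin_fun] using Submodule.finrank_le U

def certC (U : Submodule F (Fin n → F)) : ℝ :=
  hval (Fintype.card F) k₀ ℓ (Module.finrank F U) -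
    ∑ W ∈ (Finset.univ.filter fun W => U < W).attach, certC W.1
termination_by n - Module.finrank F U
decreasing_by
  have h0 : U < W.1 := by
    have := W.2
    simp only [Finset.mem_filter] at this
    exact this.2
  have h1 : Module.finrank F U < Module.finrank F W.1 :=
    Submodule.finrank_lt_finrank_of_lt h0
  have h2 : Module.finrank F W.1 ≤ n := frk_le n F W.1
  omega

lemma certC_eq (U : Submodule F (Fin n → F)) :
    certC n ℓ k₀ F U = hval (Fintype.card F) k₀ ℓ (Module.finrank F U) -
      ∑ W ∈ (Finset.univ.filter fun W => U < W), certC n ℓ k₀ F W := by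
  rw [certC, Finset.sum_attach]

lemma certC_sum (V : Submodule F (Fin n → F)) :
    ∑ W ∈ Finset.univ.filter (fun W => V ≤ W), certC n ℓ k₀ F W
      = hval (Fintype.card F) k₀ ℓ (Module.finrank F V) := by
  have hins : (Finset.univ.filter (fun W => V ≤ W))
      = insert V (Finset.univ.filter fun W => V < W) := by
    ext W
    constructor
    · intro h
      have hVW : V ≤ W := (Finset.mem_filter.mp h).2
      rcases eq_or_lt_of_le hVW with h' | h'
      · exact Finset.mem_insert.mpr (Or.inl h'.symm)
      · exact Finset.mem_insert.mpr (Or.inr (Finset.mem_filter.mpr ⟨Finset.mem_univ _, h'⟩))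
    · intro h
      rcases Finset.mem_insert.mp h with rfl | h'
      · exact Finset.mem_filter.mpr ⟨Finset.mem_univ _, le_refl _⟩
      · exact Finset.mem_filter.mpr ⟨Finset.mem_univ _, le_of_lt (Finset.mem_filter.mp h').2⟩
  rw [hins, Finset.sum_insert (by simp), certC_eq]
  ring

lemma cover_card_le (U : Submodule F (Fin n → F)) (m : ℕ) (hmdef : m = Module.finrank F U) :
    ((Finset.univ.filter (fun W => U ≤ W ∧ Module.finrank F W = m + 1) :
        Finset (Submodule F (Fin n → F))).card : ℝ)
      ≤ (Fintype.card F : ℝ)^n - (Fintype.card F : ℝ)^m := by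
  set q := Fintype.card F with hq
  have hq1 : 1 ≤ q := Fintype.card_pos
  have hwit : ∀ W' : Submodule F (Fin n → F), ∃ x : Fin n → F,
      (U ≤ W' ∧ Module.finrank F W' = m + 1) → (x ∈ W' ∧ x ∉ U) := by
    intro W'
    by_cases h : U ≤ W' ∧ Module.finrank F W' = m + 1
    · have hlt : U < W' := by
        refine lt_of_le_of_ne h.1 (fun he => ?_)
        have h2 := h.2
        rw [← he] at h2
        omega
      obtain ⟨x, hxW, hxU⟩ := SetLike.exists_of_lt hlt
      exact ⟨x, fun _ => ⟨hxW, hxU⟩⟩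
    · exact ⟨0, fun hh => absurd hh h⟩
  choose ψ hψ using hwit
  have hinj : ((Finset.univ.filter (fun W => U ≤ W ∧ Module.finrank F W = m + 1) :
      Finset (Submodule F (Fin n → F)))).card
      ≤ (Finset.univ.filter (fun x : Fin n → F => x ∉ U)).card := by
    apply Finset.card_le_card_of_injOn ψ
    · intro W' hW'
      have h := (Finset.mem_filter.mp hW').2
      exact Finset.mem_filter.mpr ⟨Finset.mem_univ _, (hψ W' h).2⟩
    · intro W1 hW1 W2 hW2 he
      have h1 := (Finset.mem_filter.mp (Finset.mem_coe.mp hW1)).2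
      have h2 := (Finset.mem_filter.mp (Finset.mem_coe.mp hW2)).2
      have key : ∀ W' : Submodule F (Fin n → F),
          (U ≤ W' ∧ Module.finrank F W' = m + 1) → W' = U ⊔ (F ∙ ψ W') := by
        intro W' h
        have hx := hψ W' h
        have hle : U ⊔ (F ∙ ψ W') ≤ W' :=
          sup_le h.1 ((Submodule.span_singleton_le_iff_mem _ _).mpr hx.1)
        have hlt : U < U ⊔ (F ∙ ψ W') := by
          refine lt_of_le_of_ne le_sup_left (fun heq => ?_)
          have hmem : ψ W' ∈ U ⊔ (F ∙ ψ W') :=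
            Submodule.mem_sup_right (Submodule.mem_span_singleton_self _)
          rw [← heq] at hmem
          exact hx.2 hmem
        have hr1 := Submodule.finrank_lt_finrank_of_lt hlt
        have hr2 : Module.finrank F W' ≤ Module.finrank F ↥(U ⊔ (F ∙ ψ W')) := by omega
        exact (Submodule.eq_of_le_of_finrank_le hle hr2).symm
      rw [key W1 h1, key W2 h2, he]
  have hcardU : (Finset.univ.filter (fun x : Fin n → F => x ∈ U)).card = q ^ m := by
    rw [← Fintype.card_subtype]
    rw [hmdef, hq]
    exact Module.card_eq_pow_finrank
  have hcardT : (Finset.univ.filter (fun x : Fin n → F => x ∉ U)).card = q ^ n - q ^ m := by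
    have h := Finset.card_filter_add_card_filter_not
      (s := (Finset.univ : Finset (Fin n → F))) (p := fun x => x ∈ U)
    have hcu : (Finset.univ : Finset (Fin n → F)).card = q ^ n := by
      rw [Finset.card_univ, hq]
      have hpi : Fintype.card (Fin n → F) = Fintype.card F ^ Module.finrank F (Fin n → F) :=
        Module.card_eq_pow_finrank
      rwa [Module.finrank_fin_fun] at hpi
    omega
  have hle2 : q ^ m ≤ q ^ n :=
    Nat.pow_le_pow_right hq1 (by rw [hmdef]; exact frk_le n F U)
  calc ((Finset.univ.filter (fun W => U ≤ W ∧ Module.finrank F W = m + 1) :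
      Finset (Submodule F (Fin n → F))).card : ℝ)
      ≤ ((Finset.univ.filter (fun x : Fin n → F => x ∉ U)).card : ℝ) := by exact_mod_cast hinj
    _ = (q:ℝ)^n - (q:ℝ)^m := by
        rw [hcardT]
        push_cast [Nat.cast_sub hle2]
        ring

lemma certC_main (hk0n : k₀ ≤ n) (hnl : n ≤ ℓ) :
    ∀ U : Submodule F (Fin n → F),
      (k₀ ≤ Module.finrank F U → certC n ℓ k₀ F U = 0) ∧
      (Module.finrank F U < k₀ → 0 < certC n ℓ k₀ F U) := by
  have hq2 : 2 ≤ Fintype.card F := Fintype.one_lt_card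
  suffices H : ∀ dd : ℕ, ∀ U : Submodule F (Fin n → F), n - Module.finrank F U < dd →
      (k₀ ≤ Module.finrank F U → certC n ℓ k₀ F U = 0) ∧
      (Module.finrank F U < k₀ → 0 < certC n ℓ k₀ F U) by
    intro U; exact H (n - Module.finrank F U + 1) U (Nat.lt_succ_self _)
  intro dd
  induction dd with
  | zero => intro U h; omega
  | succ dd ih =>
    intro U hU
    have hrkU : Module.finrank F U ≤ n := frk_le n F U
    have key0 : ∀ W : Submodule F (Fin n → F), U < W →
        (k₀ ≤ Module.finrank F W → certC n ℓ k₀ F W = 0) ∧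
        (Module.finrank F W < k₀ → 0 < certC n ℓ k₀ F W) := by
      intro W hW
      apply ih
      have h1 := Submodule.finrank_lt_finrank_of_lt hW
      have h2 := frk_le n F W
      omega
    have hnn : ∀ W : Submodule F (Fin n → F), U < W → 0 ≤ certC n ℓ k₀ F W := by
      intro W hW
      rcases lt_or_ge (Module.finrank F W) k₀ with h | h
      · exact le_of_lt ((key0 W hW).2 h)
      · exact le_of_eq ((key0 W hW).1 h).symm
    constructor
    · intro hk
      have hz : ∀ W ∈ Finset.univ.filter (fun W => U < W), certC n ℓ k₀ F W = 0 := by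
        intro W hW
        have hUW : U < W := (Finset.mem_filter.mp hW).2
        exact (key0 W hUW).1
          (le_trans hk (le_of_lt (Submodule.finrank_lt_finrank_of_lt hUW)))
      rw [certC_eq, Finset.sum_eq_zero hz, hval_eq_zero hk]
      ring
    · intro hm
      set m := Module.finrank F U with hmdef
      have hcov : ∀ W : Submodule F (Fin n → F), ∃ W',
          U < W → ((U ≤ W' ∧ Module.finrank F W' = m + 1) ∧ W' ≤ W) := by
        intro W
        by_cases hW : U < W
        · obtain ⟨x, hxW, hxU⟩ := SetLike.exists_of_lt hW
          refine ⟨U ⊔ (F ∙ x), fun _ => ⟨⟨le_sup_left, ?_⟩, ?_⟩⟩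
          · have hx0 : x ≠ 0 := fun h => hxU (h ▸ U.zero_mem)
            have hUlt : U < U ⊔ (F ∙ x) := by
              refine lt_of_le_of_ne le_sup_left (fun h => hxU ?_)
              have hx : x ∈ U ⊔ (F ∙ x) :=
                Submodule.mem_sup_right (Submodule.mem_span_singleton_self x)
              rwa [← h] at hx
            have h1 : Module.finrank F ↥(U ⊔ (F ∙ x)) ≤ Module.finrank F U + 1 := by
              have h2 := Submodule.finrank_add_le_finrank_add_finrank U (F ∙ x)
              rwa [finrank_span_singleton hx0] at h2
            have h3 := Submodule.finrank_lt_finrank_of_lt hUlt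
            omega
          · exact sup_le (le_of_lt hW) ((Submodule.span_singleton_le_iff_mem x W).mpr hxW)
        · exact ⟨U, fun h => absurd h hW⟩
      choose φ hφ using hcov
      set C : Finset (Submodule F (Fin n → F)) :=
        Finset.univ.filter (fun W => U ≤ W ∧ Module.finrank F W = m + 1) with hCdef
      have hCmem : ∀ W' ∈ C, U < W' := by
        intro W' hW'
        have h := (Finset.mem_filter.mp hW').2
        refine lt_of_le_of_ne h.1 (fun he => ?_)
        have h2 := h.2
        rw [← he] at h2
        omega
      have hmaps : ∀ W ∈ Finset.univ.filter (fun W => U < W), φ W ∈ C := by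
        intro W hW
        have hUW : U < W := (Finset.mem_filter.mp hW).2
        exact Finset.mem_filter.mpr ⟨Finset.mem_univ _, (hφ W hUW).1⟩
      have hfib := Finset.sum_fiberwise_of_maps_to hmaps (certC n ℓ k₀ F)
      have hSbound : ∑ W ∈ Finset.univ.filter (fun W => U < W), certC n ℓ k₀ F W
          ≤ (C.card : ℝ) * hval (Fintype.card F) k₀ ℓ (m+1) := by
        rw [← hfib]
        have hstep : ∀ W' ∈ C,
            (∑ W ∈ (Finset.univ.filter (fun W => U < W)).filter (fun W => φ W = W'),
              certC n ℓ k₀ F W) ≤ hval (Fintype.card F) k₀ ℓ (m+1) := by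
          intro W' hW'
          have h1 : (Finset.univ.filter (fun W => U < W)).filter (fun W => φ W = W')
              ⊆ Finset.univ.filter (fun W => W' ≤ W) := by
            intro W hW
            have h2 := Finset.mem_filter.mp hW
            have hUW : U < W := (Finset.mem_filter.mp h2.1).2
            refine Finset.mem_filter.mpr ⟨Finset.mem_univ _, ?_⟩
            rw [← h2.2]
            exact (hφ W hUW).2
          have h3 : ∑ W ∈ Finset.univ.filter (fun W => W' ≤ W), certC n ℓ k₀ F W
              = hval (Fintype.card F) k₀ ℓ (m+1) := by
            rw [certC_sum]
            have h4 := (Finset.mem_filter.mp hW').2.2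
            rw [h4]
          rw [← h3]
          apply Finset.sum_le_sum_of_subset_of_nonneg h1
          intro W hW _
          have hW'W : W' ≤ W := (Finset.mem_filter.mp hW).2
          exact hnn W (lt_of_lt_of_le (hCmem W' hW') hW'W)
        calc ∑ W' ∈ C, ∑ W ∈ (Finset.univ.filter (fun W => U < W)).filter (fun W => φ W = W'),
              certC n ℓ k₀ F W
            ≤ ∑ _W' ∈ C, hval (Fintype.card F) k₀ ℓ (m+1) := Finset.sum_le_sum hstep
          _ = (C.card : ℝ) * hval (Fintype.card F) k₀ ℓ (m+1) := by
              rw [Finset.sum_const, nsmul_eq_mul]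
      have hcard : ((C.card : ℝ)) ≤ (Fintype.card F : ℝ)^n - (Fintype.card F : ℝ)^m :=
        cover_card_le n F U m hmdef
      have hnum : (C.card : ℝ) * hval (Fintype.card F) k₀ ℓ (m+1)
          < hval (Fintype.card F) k₀ ℓ m :=
        hval_key (Fintype.card F) k₀ ℓ n m hq2 hm hk0n hnl _ (Nat.cast_nonneg _) hcard
      rw [certC_eq]
      rw [← hmdef]
      linarith [hSbound, hnum]

lemma kzero_spec : kzero n d F ≤ n ∧
    ∃ C0 : Submodule F (Fin n → F), MinDistGe n d F C0 ∧
      Module.finrank F C0 = kzero n d F := by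
  have hne : ({k : ℕ | ∃ C : Submodule F (Fin n → F),
      MinDistGe n d F C ∧ Module.finrank F C = k}).Nonempty := by
    refine ⟨0, ⊥, ?_, ?_⟩
    · intro w hw hw0
      exact absurd ((Submodule.mem_bot F).mp hw) hw0
    · simp
  have hbdd : BddAbove {k : ℕ | ∃ C : Submodule F (Fin n → F),
      MinDistGe n d F C ∧ Module.finrank F C = k} := by
    refine ⟨n, fun k hk => ?_⟩
    obtain ⟨C, -, hC⟩ := hk
    rw [← hC]
    exact frk_le n F C
  have hmem := Nat.sSup_mem hne hbdd
  obtain ⟨C0, hC0, hrk⟩ := hmem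
  have hk : kzero n d F = sSup {k : ℕ | ∃ C : Submodule F (Fin n → F),
      MinDistGe n d F C ∧ Module.finrank F C = k} := rfl
  rw [hk]
  exact ⟨by rw [← hrk]; exact frk_le n F C0, C0, hC0, hrk⟩


lemma card_coe (S : Submodule F (Fin n → F)) :
    (Fintype.card S : ℝ) = (Fintype.card F : ℝ) ^ (Module.finrank F S) := by
  have : Fintype.card S = Fintype.card F ^ Module.finrank F S :=
    Module.card_eq_pow_finrank (K := F) (V := ↥S)
  exact_mod_cast this


/-- **Structure of optima for the partial Krawtchouk objective (Theorem 4.4,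
structure of optima).** For `ℓ ≥ n`, any maximizer of `∑_S |S| p S` over the
dimension-constrained pseudoprobability program is a probability distribution
supported on subspaces of dimension exactly `k₀`. -/
theorem partial_optimum_solutions_integral
    (n ℓ d : ℕ) (hn : 1 ≤ n) (hd : 1 ≤ d) (hdn : d ≤ n) (hnl : n ≤ ℓ)
    (F : Type) [Field F] [Fintype F]
    (p : Submodule F (Fin n → F) → ℝ)
    (hfeas : PseudoFeasibleDim n ℓ d F p)
    (hopt : ∀ p' : Submodule F (Fin n → F) → ℝ, PseudoFeasibleDim n ℓ d F p' →
      (∑ S : Submodule F (Fin n → F), (Fintype.card S : ℝ) * p' S)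
        ≤ ∑ S : Submodule F (Fin n → F), (Fintype.card S : ℝ) * p S) :
    (∀ S : Submodule F (Fin n → F), 0 ≤ p S) ∧
    (∑ S : Submodule F (Fin n → F), p S) = 1 ∧
    (∀ S : Submodule F (Fin n → F), Module.finrank F S ≠ kzero n d F → p S = 0) := by
  obtain ⟨hsum1, hdim0, hFc, hGc⟩ := hfeas
  have hq2 : 2 ≤ Fintype.card F := Fintype.one_lt_card
  have hq0 : (0:ℝ) < (Fintype.card F : ℝ) := by positivity
  have hq1 : (1:ℝ) < (Fintype.card F : ℝ) := by exact_mod_cast hq2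
  obtain ⟨hk0n, C0, hC0dist, hC0rk⟩ := kzero_spec n d F
  -- notation
  set k0 := kzero n d F with hk0def
  -- Step A : delta solution gives q^k0 ≤ V
  have hdelta : ((Fintype.card F : ℝ)) ^ k0
      ≤ ∑ S : Submodule F (Fin n → F), (Fintype.card S : ℝ) * p S := by
    have hfeas' : PseudoFeasibleDim n ℓ d F (fun S => if S = C0 then (1:ℝ) else 0) := by
      refine ⟨by simp, ?_, ?_, ?_⟩
      · intro S hS
        by_cases h : S = C0
        · subst h; rw [hC0rk] at hS; omega
        · simp [h]
      · intro U
        apply Finset.sum_nonneg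
        intro S _
        split_ifs <;> positivity
      · intro U
        apply Finset.sum_nonneg
        intro S _
        split_ifs <;> positivity
    have h := hopt _ hfeas'
    calc ((Fintype.card F : ℝ)) ^ k0
        = ∑ S : Submodule F (Fin n → F), (Fintype.card S : ℝ) *
            (if S = C0 then (1:ℝ) else 0) := by
          simp only [mul_ite, mul_one, mul_zero, Finset.sum_ite_eq', Finset.mem_univ, if_true]
          rw [card_coe n F C0, hC0rk]
      _ ≤ _ := h
  -- Step B/C : certificate identity  T = q^k0 - V
  have hcert : ∑ U : Submodule F (Fin n → F), certC n ℓ k0 F U *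
        (∑ S : Submodule F (Fin n → F),
          if S ≤ U then (Fintype.card S : ℝ) ^ ℓ * p S else 0)
      = (Fintype.card F : ℝ) ^ k0
        - ∑ S : Submodule F (Fin n → F), (Fintype.card S : ℝ) * p S := by
    have swap : ∑ U : Submodule F (Fin n → F), certC n ℓ k0 F U *
          (∑ S : Submodule F (Fin n → F),
            if S ≤ U then (Fintype.card S : ℝ) ^ ℓ * p S else 0)
        = ∑ S : Submodule F (Fin n → F), ∑ U : Submodule F (Fin n → F),
            (if S ≤ U then certC n ℓ k0 F U * ((Fintype.card S : ℝ) ^ ℓ * p S) else 0) := by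
      rw [Finset.sum_comm]
      apply Finset.sum_congr rfl
      intro U _
      rw [Finset.mul_sum]
      apply Finset.sum_congr rfl
      intro S _
      rw [mul_ite, mul_zero]
    rw [swap]
    have inner : ∀ S : Submodule F (Fin n → F),
        ∑ U : Submodule F (Fin n → F),
          (if S ≤ U then certC n ℓ k0 F U * ((Fintype.card S : ℝ) ^ ℓ * p S) else 0)
        = hval (Fintype.card F) k0 ℓ (Module.finrank F S) *
            ((Fintype.card S : ℝ) ^ ℓ * p S) := by
      intro S
      rw [← certC_sum n ℓ k0 F S, Finset.sum_filter, Finset.sum_mul]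
      apply Finset.sum_congr rfl
      intro U _
      rw [ite_mul, zero_mul]
    have point : ∀ S : Submodule F (Fin n → F),
        hval (Fintype.card F) k0 ℓ (Module.finrank F S) *
            ((Fintype.card S : ℝ) ^ ℓ * p S)
        = (Fintype.card F : ℝ) ^ k0 * p S - (Fintype.card S : ℝ) * p S := by
      intro S
      rcases le_or_gt (Module.finrank F S) k0 with h | h
      · rw [hval_def _ _ _ _ h, card_coe n F S, ← pow_mul]
        have hne : ((Fintype.card F : ℝ)) ^ (Module.finrank F S * ℓ) ≠ 0 := by positivity
        field_simp
      · rw [hdim0 S h]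
        simp
    calc ∑ S : Submodule F (Fin n → F), ∑ U : Submodule F (Fin n → F),
            (if S ≤ U then certC n ℓ k0 F U * ((Fintype.card S : ℝ) ^ ℓ * p S) else 0)
        = ∑ S : Submodule F (Fin n → F),
            ((Fintype.card F : ℝ) ^ k0 * p S - (Fintype.card S : ℝ) * p S) := by
          apply Finset.sum_congr rfl
          intro S _
          rw [inner S, point S]
      _ = (Fintype.card F : ℝ) ^ k0
            - ∑ S : Submodule F (Fin n → F), (Fintype.card S : ℝ) * p S := by
          rw [Finset.sum_sub_distrib, ← Finset.mul_sum, hsum1, mul_one]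
  -- Step B : certificate sum is nonnegative, and conclude T = 0
  have hcnn : ∀ U : Submodule F (Fin n → F), 0 ≤ certC n ℓ k0 F U := by
    intro U
    rcases lt_or_ge (Module.finrank F U) k0 with h | h
    · exact le_of_lt ((certC_main n ℓ k0 F hk0n hnl U).2 h)
    · exact le_of_eq ((certC_main n ℓ k0 F hk0n hnl U).1 h).symm
  have hterm_nn : ∀ U ∈ (Finset.univ : Finset (Submodule F (Fin n → F))),
      0 ≤ certC n ℓ k0 F U *
        (∑ S : Submodule F (Fin n → F),
          if S ≤ U then (Fintype.card S : ℝ) ^ ℓ * p S else 0) :=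
    fun U _ => mul_nonneg (hcnn U) (hFc U)
  have hT0 : ∑ U : Submodule F (Fin n → F), certC n ℓ k0 F U *
        (∑ S : Submodule F (Fin n → F),
          if S ≤ U then (Fintype.card S : ℝ) ^ ℓ * p S else 0) = 0 := by
    have h1 : (0:ℝ) ≤ (Fintype.card F : ℝ) ^ k0
        - ∑ S : Submodule F (Fin n → F), (Fintype.card S : ℝ) * p S := by
      rw [← hcert]
      exact Finset.sum_nonneg hterm_nn
    linarith [hdelta, hcert]
  -- Step E : F-constraint is tight below k0
  have hFzero : ∀ U : Submodule F (Fin n → F), Module.finrank F U < k0 →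
      (∑ S : Submodule F (Fin n → F),
        if S ≤ U then (Fintype.card S : ℝ) ^ ℓ * p S else 0) = 0 := by
    intro U hU
    have hall := (Finset.sum_eq_zero_iff_of_nonneg hterm_nn).mp hT0 U (Finset.mem_univ U)
    have hpos := (certC_main n ℓ k0 F hk0n hnl U).2 hU
    exact (mul_eq_zero.mp hall).resolve_left (ne_of_gt hpos)
  -- Step F : p vanishes below k0
  have hvan : ∀ m : ℕ, ∀ S : Submodule F (Fin n → F),
      Module.finrank F S = m → m < k0 → p S = 0 := by
    intro m
    induction m using Nat.strong_induction_on with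
    | _ m ih =>
      intro S hrk hmk
      have hF0 := hFzero S (by omega)
      have hins : (Finset.univ.filter (fun T : Submodule F (Fin n → F) => T ≤ S))
          = insert S (Finset.univ.filter fun T => T < S) := by
        ext T
        constructor
        · intro h
          have hTS : T ≤ S := (Finset.mem_filter.mp h).2
          rcases eq_or_lt_of_le hTS with h' | h'
          · exact Finset.mem_insert.mpr (Or.inl h')
          · exact Finset.mem_insert.mpr (Or.inr (Finset.mem_filter.mpr ⟨Finset.mem_univ _, h'⟩))
        · intro h
          rcases Finset.mem_insert.mp h with rfl | h'
          · exact Finset.mem_filter.mpr ⟨Finset.mem_univ _, le_refl _⟩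
          · exact Finset.mem_filter.mpr ⟨Finset.mem_univ _, le_of_lt (Finset.mem_filter.mp h').2⟩
      rw [← Finset.sum_filter, hins, Finset.sum_insert (by simp)] at hF0
      have hrest : ∑ T ∈ Finset.univ.filter (fun T => T < S),
          (Fintype.card T : ℝ) ^ ℓ * p T = 0 := by
        apply Finset.sum_eq_zero
        intro T hT
        have hTS : T < S := (Finset.mem_filter.mp hT).2
        have hrkT := Submodule.finrank_lt_finrank_of_lt hTS
        rw [ih (Module.finrank F T) (by omega) T rfl (by omega), mul_zero]
      rw [hrest, add_zero] at hF0
      have hpos : (0:ℝ) < (Fintype.card S : ℝ) ^ ℓ := by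
        have : 0 < Fintype.card S := Fintype.card_pos
        positivity
      exact (mul_eq_zero.mp hF0).resolve_left (ne_of_gt hpos)
  -- Step G : conclusions
  have hzero_ne : ∀ S : Submodule F (Fin n → F), Module.finrank F S ≠ k0 → p S = 0 := by
    intro S hS
    rcases lt_or_gt_of_ne hS with h | h
    · exact hvan (Module.finrank F S) S rfl h
    · exact hdim0 S h
  refine ⟨?_, hsum1, hzero_ne⟩
  intro S
  rcases eq_or_ne (Module.finrank F S) k0 with h | h
  · have hG := hGc S
    have hsingle : ∑ T : Submodule F (Fin n → F), (if S ≤ T then p T else 0) = p S := by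
      rw [Finset.sum_eq_single_of_mem S (Finset.mem_univ S)]
      · rw [if_pos (le_refl S)]
      · intro T _ hTS
        by_cases hle : S ≤ T
        · rw [if_pos hle]
          apply hdim0
          have : S < T := lt_of_le_of_ne hle (Ne.symm hTS)
          have := Submodule.finrank_lt_finrank_of_lt this
          omega
        · rw [if_neg hle]
    rw [hsingle] at hG
    exact hG
  · rw [hzero_ne S h]
end
end
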